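/- arXiv:2007.13157 — 5 statements merged into one kernel-verified Lean document; each statement's English description precedes it below -/
import Mathlib

section
/- For a network (V,c) and finitely supported real-valued functions f,g on V, one has ⟨2Γ(f,g), f·g⟩ = (1/4)E(f², g²) + Λ(f,g), where Λ(f,g) = (1/4)Σ_{x,y} c(x,y)|f(x)-f(y)|²·|g(x)-g(y)|² and E(u,v) = Σ_{x,y} c(x,y)(u(x)-u(y))(v(x)-v(y)). -/
private lemma network_summable_aux {V : Type*}
    (c : V → V → ℝ)
    (hsymm : ∀ x y, c x y = c y x)
    (hnonneg : ∀ x y, 0 ≤ c x y)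
    (hsum : ∀ x, Summable (fun y => c x y))
    (K : Finset V) (h : V → V → ℝ) (M : ℝ) (hM0 : 0 ≤ M)
    (hM : ∀ x y, |h x y| ≤ M)
    (hsupp : ∀ x y, x ∉ K → y ∉ K → h x y = 0) :
    Summable (fun p : V × V => c p.1 p.2 * h p.1 p.2) := by
  classical
  have B1 : Summable (fun p : V × V => if p.1 ∈ K then M * c p.1 p.2 else 0) := by
    rw [summable_prod_of_nonneg (fun p => by
      by_cases hx : p.1 ∈ K
      · simp only [hx, if_true]; exact mul_nonneg hM0 (hnonneg _ _)
      · simp only [hx, if_false]; exact le_rfl)]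
    constructor
    · intro x
      by_cases hx : x ∈ K
      · simp only [hx, if_true]
        exact (hsum x).mul_left M
      · simp only [hx, if_false]
        exact summable_zero
    · apply summable_of_ne_finset_zero (s := K)
      intro x hx
      simp only [hx, if_false, tsum_zero]
  have B2 : Summable (fun p : V × V => if p.2 ∈ K then M * c p.1 p.2 else 0) := by
    rw [summable_prod_of_nonneg (fun p => by
      by_cases hx : p.2 ∈ K
      · simp only [hx, if_true]; exact mul_nonneg hM0 (hnonneg _ _)
      · simp only [hx, if_false]; exact le_rfl)]
    constructor
    · intro x
      exact summable_of_ne_finset_zero (s := K) (fun y hy => if_neg hy)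
    · have hsummand : Summable (fun x => ∑ y ∈ K, M * c x y) :=
        summable_sum (fun y _ => ((hsum y).congr (fun x => (hsymm y x))).mul_left M)
      apply hsummand.congr
      intro x
      rw [tsum_eq_sum (s := K) (fun y hy => if_neg hy)]
      exact Finset.sum_congr rfl (fun y hy => (if_pos hy).symm)
  apply Summable.of_abs
  apply Summable.of_nonneg_of_le (fun p => abs_nonneg _) _ (B1.add B2)
  rintro ⟨x, y⟩
  show |c x y * h x y| ≤ (if x ∈ K then M * c x y else 0) + (if y ∈ K then M * c x y else 0)
  rw [abs_mul, abs_of_nonneg (hnonneg x y)]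
  have hb : c x y * |h x y| ≤ M * c x y := by
    rw [mul_comm M (c x y)]
    exact mul_le_mul_of_nonneg_left (hM x y) (hnonneg x y)
  have hnn : 0 ≤ M * c x y := mul_nonneg hM0 (hnonneg x y)
  by_cases hx : x ∈ K <;> by_cases hy : y ∈ K <;> simp only [hx, hy, if_true, if_false]
  · linarith
  · linarith
  · linarith
  · rw [hsupp x y hx hy]
    simp

private lemma abs_prod4_le {a b c d a' b' c' d' : ℝ}
    (ha : |a| ≤ a') (hb : |b| ≤ b') (hc : |c| ≤ c') (hd : |d| ≤ d') :
    |a * b * c * d| ≤ a' * b' * c' * d' := by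
  have ha' : 0 ≤ a' := (abs_nonneg a).trans ha
  have hb' : 0 ≤ b' := (abs_nonneg b).trans hb
  have hc' : 0 ≤ c' := (abs_nonneg c).trans hc
  rw [abs_mul, abs_mul, abs_mul]
  gcongr

/-- For a network `(V,c)` and finitely supported real functions `f, g`,
`⟨2Γ(f,g), f·g⟩ = (1/4)·E(f², g²) + Λ(f,g)`, where
`2Γ(f,g)(x) = Σ_y P(x,y)(f x - f y)(g x - g y)`,
`E(u,v) = Σ_{x,y} c x y (u x - u y)(v x - v y)` and
`Λ(f,g) = (1/4) Σ_{x,y} c x y (f x - f y)² (g x - g y)²`. -/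
theorem inner_twoGamma_mul_eq_energy_add_Lambda {V : Type*}
    (c : V → V → ℝ) (π : V → ℝ)
    (hsymm : ∀ x y, c x y = c y x)
    (hnonneg : ∀ x y, 0 ≤ c x y)
    (hsum : ∀ x, Summable (fun y => c x y))
    (hπ : ∀ x, π x = ∑' y, c x y)
    (hπpos : ∀ x, 0 < π x)
    (f g : V → ℝ)
    (hf : (Function.support f).Finite)
    (hg : (Function.support g).Finite) :
    (∑' x : V, π x * (∑' y : V, c x y / π x * (f x - f y) * (g x - g y)) * (f x * g x))
      = (1/4) * (∑' p : V × V, c p.1 p.2 * ((f p.1)^2 - (f p.2)^2) * ((g p.1)^2 - (g p.2)^2))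
        + (1/4) * ∑' p : V × V, c p.1 p.2 * (f p.1 - f p.2)^2 * (g p.1 - g p.2)^2 := by
  classical
  rcases isEmpty_or_nonempty V with hV | hV
  · rw [tsum_empty, tsum_empty, tsum_empty]; ring
  set K : Finset V := hf.toFinset ∪ hg.toFinset with hKdef
  have hK : ∀ x ∉ K, f x = 0 ∧ g x = 0 := by
    intro x hx
    simp only [hKdef, Finset.mem_union, Set.Finite.mem_toFinset, Function.mem_support,
      not_or, not_not] at hx
    exact hx
  -- a uniform bound on |f| and |g|
  obtain ⟨A, hA⟩ : ∃ A, ∀ x, |f x| ≤ A ∧ |g x| ≤ A := by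
    have hfin : ((fun x => max |f x| |g x|) '' (K : Set V) ∪ {0}).Finite :=
      (K.finite_toSet.image _).union (Set.finite_singleton 0)
    obtain ⟨A, hA⟩ := hfin.bddAbove
    refine ⟨A, fun x => ?_⟩
    by_cases hx : x ∈ K
    · have := hA (Set.mem_union_left _ ⟨x, hx, rfl⟩)
      exact ⟨(le_max_left _ _).trans this, (le_max_right _ _).trans this⟩
    · obtain ⟨h1, h2⟩ := hK x hx
      have h0 : (0:ℝ) ≤ A := hA (Set.mem_union_right _ rfl)
      constructor <;> simp [h1, h2, h0]
  obtain ⟨x₀⟩ := hV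
  have hA0 : 0 ≤ A := (abs_nonneg (f x₀)).trans (hA x₀).1
  have hfb : ∀ x, |f x| ≤ A := fun x => (hA x).1
  have hgb : ∀ x, |g x| ≤ A := fun x => (hA x).2
  have hA2 : ∀ x, |f x| ≤ 2 * A ∧ |g x| ≤ 2 * A := by
    intro x
    obtain ⟨h1, h2⟩ := hA x
    constructor <;> linarith
  have hsub : ∀ (u : V → ℝ), (∀ x, |u x| ≤ A) → ∀ x y, |u x - u y| ≤ 2 * A := by
    intro u hu x y
    calc |u x - u y| ≤ |u x| + |u y| := abs_sub _ _
    _ ≤ 2 * A := by have := hu x; have := hu y; linarith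
  have hadd : ∀ (u : V → ℝ), (∀ x, |u x| ≤ A) → ∀ x y, |u x + u y| ≤ 2 * A := by
    intro u hu x y
    calc |u x + u y| ≤ |u x| + |u y| := abs_add_le _ _
    _ ≤ 2 * A := by have := hu x; have := hu y; linarith
  set M : ℝ := 2 * A * (2 * A) * (2 * A) * (2 * A) with hMdef
  have hM0 : 0 ≤ M := by positivity
  -- the three summand functions
  set L : V × V → ℝ :=
      fun p => c p.1 p.2 * ((f p.1 - f p.2) * (g p.1 - g p.2) * (f p.1 * g p.1)) with hLdef
  have SL : Summable L := by
    have := network_summable_aux c hsymm hnonneg hsum K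
      (fun x y => (f x - f y) * (g x - g y) * (f x * g x)) M hM0
      (by
        intro x y
        show |(f x - f y) * (g x - g y) * (f x * g x)| ≤ M
        have heq : (f x - f y) * (g x - g y) * (f x * g x)
            = (f x - f y) * (g x - g y) * f x * g x := by ring
        rw [heq]
        exact abs_prod4_le (hsub f hfb x y) (hsub g hgb x y) (hA2 x).1 (hA2 x).2)
      (by
        intro x y hx hy
        obtain ⟨h1, h2⟩ := hK x hx
        show (f x - f y) * (g x - g y) * (f x * g x) = 0
        rw [h1, h2]; ring)
    exact this.congr (fun p => rfl)
  have SE : Summable (fun p : V × V =>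
      c p.1 p.2 * ((f p.1)^2 - (f p.2)^2) * ((g p.1)^2 - (g p.2)^2)) := by
    have := network_summable_aux c hsymm hnonneg hsum K
      (fun x y => ((f x)^2 - (f y)^2) * ((g x)^2 - (g y)^2)) M hM0
      (by
        intro x y
        show |((f x)^2 - (f y)^2) * ((g x)^2 - (g y)^2)| ≤ M
        have heq : ((f x)^2 - (f y)^2) * ((g x)^2 - (g y)^2)
            = (f x - f y) * (f x + f y) * (g x - g y) * (g x + g y) := by ring
        rw [heq]
        exact abs_prod4_le (hsub f hfb x y) (hadd f hfb x y) (hsub g hgb x y) (hadd g hgb x y))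
      (by
        intro x y hx hy
        obtain ⟨h1, h2⟩ := hK x hx
        obtain ⟨h3, h4⟩ := hK y hy
        show ((f x)^2 - (f y)^2) * ((g x)^2 - (g y)^2) = 0
        rw [h1, h2, h3, h4]; ring)
    exact this.congr (fun p => by ring)
  have SΛ : Summable (fun p : V × V =>
      c p.1 p.2 * (f p.1 - f p.2)^2 * (g p.1 - g p.2)^2) := by
    have := network_summable_aux c hsymm hnonneg hsum K
      (fun x y => (f x - f y)^2 * (g x - g y)^2) M hM0
      (by
        intro x y
        show |(f x - f y)^2 * (g x - g y)^2| ≤ M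
        have heq : (f x - f y)^2 * (g x - g y)^2
            = (f x - f y) * (f x - f y) * (g x - g y) * (g x - g y) := by ring
        rw [heq]
        exact abs_prod4_le (hsub f hfb x y) (hsub f hfb x y) (hsub g hgb x y) (hsub g hgb x y))
      (by
        intro x y hx hy
        obtain ⟨h1, h2⟩ := hK x hx
        obtain ⟨h3, h4⟩ := hK y hy
        show (f x - f y)^2 * (g x - g y)^2 = 0
        rw [h1, h2, h3, h4]; ring)
    exact this.congr (fun p => by ring)
  -- fiberwise summability of L
  have SLfib : ∀ x, Summable (fun y => L (x, y)) := by
    intro x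
    have habs : Summable (fun p : V × V => |L p|) := SL.abs
    exact ((summable_prod_of_nonneg (fun p => abs_nonneg _)).1 habs).1 x |>.of_abs
  -- Step 1: simplify the LHS to ∑' p, L p
  have step1 : (∑' x : V, π x * (∑' y : V, c x y / π x * (f x - f y) * (g x - g y)) * (f x * g x))
      = ∑' p : V × V, L p := by
    rw [Summable.tsum_prod' SL SLfib]
    apply tsum_congr
    intro x
    have hπx : π x ≠ 0 := (hπpos x).ne'
    have h1 : (fun y => c x y / π x * (f x - f y) * (g x - g y))
        = fun y => (π x)⁻¹ * (c x y * (f x - f y) * (g x - g y)) := by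
      funext y; field_simp
    calc π x * (∑' y : V, c x y / π x * (f x - f y) * (g x - g y)) * (f x * g x)
        = π x * ((π x)⁻¹ * ∑' y : V, c x y * (f x - f y) * (g x - g y)) * (f x * g x) := by
          rw [h1, tsum_mul_left]
      _ = (∑' y : V, c x y * (f x - f y) * (g x - g y)) * (f x * g x) := by
          congr 1
          rw [← mul_assoc, mul_inv_cancel₀ hπx, one_mul]
      _ = ∑' y : V, (c x y * (f x - f y) * (g x - g y)) * (f x * g x) := tsum_mul_right.symm
      _ = ∑' y : V, L (x, y) := tsum_congr fun y => by
          show c x y * (f x - f y) * (g x - g y) * (f x * g x)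
            = c x y * ((f x - f y) * (g x - g y) * (f x * g x))
          ring
  rw [step1]
  -- symmetry
  have Lswap : Summable (fun p : V × V => L p.swap) :=
    ((Equiv.prodComm V V).summable_iff).2 SL
  have swap_eq : ∑' p : V × V, L p.swap = ∑' p : V × V, L p :=
    (Equiv.prodComm V V).tsum_eq L
  -- pointwise identity
  have point : ∀ p : V × V, L p + L p.swap
      = 2 * ((1/4) * (c p.1 p.2 * ((f p.1)^2 - (f p.2)^2) * ((g p.1)^2 - (g p.2)^2))
           + (1/4) * (c p.1 p.2 * (f p.1 - f p.2)^2 * (g p.1 - g p.2)^2)) := by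
    rintro ⟨x, y⟩
    show c x y * ((f x - f y) * (g x - g y) * (f x * g x))
        + c y x * ((f y - f x) * (g y - g x) * (f y * g y))
      = 2 * ((1/4) * (c x y * ((f x)^2 - (f y)^2) * ((g x)^2 - (g y)^2))
           + (1/4) * (c x y * (f x - f y)^2 * (g x - g y)^2))
    rw [hsymm y x]
    ring
  have key : 2 * (∑' p : V × V, L p)
      = 2 * ((1/4) * (∑' p : V × V, c p.1 p.2 * ((f p.1)^2 - (f p.2)^2) * ((g p.1)^2 - (g p.2)^2))
        + (1/4) * ∑' p : V × V, c p.1 p.2 * (f p.1 - f p.2)^2 * (g p.1 - g p.2)^2) := by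
    calc 2 * (∑' p : V × V, L p)
        = (∑' p : V × V, L p) + (∑' p : V × V, L p.swap) := by rw [swap_eq]; ring
      _ = ∑' p : V × V, (L p + L p.swap) := (Summable.tsum_add SL Lswap).symm
      _ = ∑' p : V × V, 2 * ((1/4) * (c p.1 p.2 * ((f p.1)^2 - (f p.2)^2) * ((g p.1)^2 - (g p.2)^2))
           + (1/4) * (c p.1 p.2 * (f p.1 - f p.2)^2 * (g p.1 - g p.2)^2)) := tsum_congr point
      _ = 2 * ∑' p : V × V, ((1/4) * (c p.1 p.2 * ((f p.1)^2 - (f p.2)^2) * ((g p.1)^2 - (g p.2)^2))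
           + (1/4) * (c p.1 p.2 * (f p.1 - f p.2)^2 * (g p.1 - g p.2)^2)) := tsum_mul_left
      _ = 2 * ((∑' p : V × V, (1/4) * (c p.1 p.2 * ((f p.1)^2 - (f p.2)^2) * ((g p.1)^2 - (g p.2)^2)))
           + ∑' p : V × V, (1/4) * (c p.1 p.2 * (f p.1 - f p.2)^2 * (g p.1 - g p.2)^2)) := by
          rw [Summable.tsum_add (SE.mul_left (1/4)) (SΛ.mul_left (1/4))]
      _ = 2 * ((1/4) * (∑' p : V × V, c p.1 p.2 * ((f p.1)^2 - (f p.2)^2) * ((g p.1)^2 - (g p.2)^2))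
           + (1/4) * ∑' p : V × V, c p.1 p.2 * (f p.1 - f p.2)^2 * (g p.1 - g p.2)^2) := by
          rw [tsum_mul_left, tsum_mul_left]
  linarith
end

section
/- Let (V,c) be a network, Ω ⊂ V a finite subset of size n, and (λ_i, u_i)_{i=1}^n a Dirichlet system for Ω (orthonormal real eigenfunctions of Δ supported in Ω with eigenvalues λ_1 ≤ ⋯ ≤ λ_n). Then for any k < n and any real-valued function α: V → ℝ, Σ_{i=1}^k (λ_{k+1} − λ_i)² (⟨Γ(α), u_i²⟩ − Λ(α, u_i)) ≤ Σ_{i=1}^k (λ_{k+1} − λ_i) ‖u_i·Δα − 2Γ(α, u_i)‖², where all inner products and norms are with respect to the weight π. -/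
open Finset Matrix

/-- main universal estimate, Lemma `main bound`:
Let `(V,c)` be a network, `Ω` a finite subset of size `n`, and `(λ_i, u_i)_{i=1}^n`
a Dirichlet system for `Ω`.  Then for any `k < n` and any `α : V → ℝ`,
`Σ_{i=1}^k (λ_{k+1} − λ_i)² (⟨Γ(α), u_i²⟩ − Λ(α, u_i))
  ≤ Σ_{i=1}^k (λ_{k+1} − λ_i) ‖u_i·Δα − 2Γ(α, u_i)‖²`,
all inner products/norms being with respect to the weight `π`. -/
theorem universal_inequality_dirichlet_system {V : Type*}
    (c : V → V → ℝ) (π : V → ℝ)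
    (hsymm : ∀ x y, c x y = c y x)
    (hnonneg : ∀ x y, 0 ≤ c x y)
    (hsum : ∀ x, Summable (fun y => c x y))
    (hπ : ∀ x, π x = ∑' y, c x y)
    (hπpos : ∀ x, 0 < π x)
    (Ω : Finset V) (n : ℕ) (hn : n = Ω.card)
    (lam : ℕ → ℝ) (u : ℕ → V → ℝ)
    -- eigenvalues ordered
    (hmono : ∀ i j, 1 ≤ i → i ≤ j → j ≤ n → lam i ≤ lam j)
    -- eigenfunctions supported in Ω
    (hsupp : ∀ i, 1 ≤ i → i ≤ n → ∀ x, x ∉ Ω → u i x = 0)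
    -- Dirichlet eigenvalue equation on Ω
    (heig : ∀ i, 1 ≤ i → i ≤ n → ∀ x ∈ Ω,
      (∑' y : V, c x y / π x * (u i x - u i y)) = lam i * u i x)
    -- orthonormality in L²(V,π)
    (hortho : ∀ i j, 1 ≤ i → i ≤ n → 1 ≤ j → j ≤ n →
      (∑' x : V, π x * u i x * u j x) = if i = j then 1 else 0)
    (k : ℕ) (hk : k < n)
    (α : V → ℝ)
    -- summability of the test-function increments
    (hα1 : ∀ x, Summable (fun y => c x y * |α x - α y|))
    (hα2 : ∀ x, Summable (fun y => c x y * (α x - α y) ^ 2)) :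
    ∑ i ∈ Finset.Icc 1 k, (lam (k+1) - lam i) ^ 2 *
        ((∑' x : V, π x * ((1/2) * ∑' y : V, c x y / π x * (α x - α y) ^ 2) * (u i x) ^ 2)
          - (1/4) * ∑' p : V × V, c p.1 p.2 * (α p.1 - α p.2) ^ 2 * (u i p.1 - u i p.2) ^ 2)
      ≤ ∑ i ∈ Finset.Icc 1 k, (lam (k+1) - lam i) *
          (∑' x : V, π x *
            (u i x * (∑' y : V, c x y / π x * (α x - α y))
              - ∑' y : V, c x y / π x * (α x - α y) * (u i x - u i y)) ^ 2) := by
  classical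
  have hπne : ∀ x, π x ≠ 0 := fun x => (hπpos x).ne'
  have hαs : ∀ x, Summable (fun y => c x y * (α x - α y)) := by
    intro x
    refine Summable.of_abs ((hα1 x).congr fun y => ?_)
    rw [abs_mul, abs_of_nonneg (hnonneg x y)]
  have hcle : ∀ x y, c x y ≤ π x := by
    intro x y
    rw [hπ x]
    exact Summable.le_tsum (hsum x) y fun b _ => hnonneg x b
  set F : ℕ → V → ℝ := fun i x => ∑ y ∈ Ω, c x y * (α x - α y) * u i y with hFdef
  set S : V → ℝ := fun x => ∑' y, c x y * (α x - α y)^2 with hSdef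
  set A2 : ℕ → ℕ → ℝ := fun i j => ∑ x ∈ Ω, π x * α x * u i x * u j x with hA2def
  set B2 : ℕ → ℕ → ℝ := fun i j => ∑ x ∈ Ω, u j x * F i x with hB2def
  have hu0 : ∀ i ∈ Finset.Icc 1 n, ∀ x, x ∉ Ω → u i x = 0 := by
    intro i hi x hx
    rw [Finset.mem_Icc] at hi
    exact hsupp i hi.1 hi.2 x hx
  -- the RHS integrand equals F i x / π x
  have hFval : ∀ i ∈ Finset.Icc 1 n, ∀ x : V,
      u i x * (∑' y : V, c x y / π x * (α x - α y))
        - (∑' y : V, c x y / π x * (α x - α y) * (u i x - u i y)) = F i x / π x := by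
    intro i hi x
    have hA : Summable (fun y => c x y / π x * (α x - α y)) := by
      refine ((hαs x).div_const (π x)).congr fun y => ?_
      ring
    have hAu : Summable (fun y => c x y / π x * (α x - α y) * u i y) :=
      summable_of_ne_finset_zero (s := Ω) fun y hy => by rw [hu0 i hi y hy, mul_zero]
    have h1 : (fun y => c x y / π x * (α x - α y) * (u i x - u i y))
        = fun y => u i x * (c x y / π x * (α x - α y)) - c x y / π x * (α x - α y) * u i y := by
      funext y; ring
    rw [h1, Summable.tsum_sub (hA.mul_left (u i x)) hAu, tsum_mul_left]
    have h2 : ∑' y, c x y / π x * (α x - α y) * u i y = F i x / π x := by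
      have h3 : (fun y => c x y / π x * (α x - α y) * u i y)
          = fun y => (c x y * (α x - α y) * u i y) / π x := by funext y; ring
      rw [h3, tsum_div_const,
        tsum_eq_sum (s := Ω) (fun y hy => by rw [hu0 i hi y hy, mul_zero])]
    rw [h2]; ring
  have hslice : ∀ y, Summable (fun x => c x y * (α x - α y)^2) := by
    intro y
    refine (hα2 y).congr fun x => ?_
    rw [hsymm y x]; ring
  have hFsqle : ∀ i ∈ Finset.Icc 1 n, ∀ x,
      (F i x)^2 / π x ≤ (Ω.card : ℝ) * ∑ y ∈ Ω, c x y * (α x - α y)^2 * (u i y)^2 := by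
    intro i hi x
    have h1 : (F i x)^2 ≤ (Ω.card : ℝ) * ∑ y ∈ Ω, (c x y * (α x - α y) * u i y)^2 :=
      sq_sum_le_card_mul_sum_sq
    have h2 : ∑ y ∈ Ω, (c x y * (α x - α y) * u i y)^2
        ≤ π x * ∑ y ∈ Ω, c x y * (α x - α y)^2 * (u i y)^2 := by
      rw [Finset.mul_sum]
      refine Finset.sum_le_sum fun y _ => ?_
      have h3 : (c x y * (α x - α y) * u i y)^2
          = c x y * (c x y * (α x - α y)^2 * (u i y)^2) := by ring
      rw [h3]
      exact mul_le_mul_of_nonneg_right (hcle x y)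
        (mul_nonneg (mul_nonneg (hnonneg x y) (sq_nonneg _)) (sq_nonneg _))
    rw [div_le_iff₀ (hπpos x)]
    have h4 := mul_le_mul_of_nonneg_left h2 (by positivity : (0:ℝ) ≤ (Ω.card : ℝ))
    have h5 : (Ω.card : ℝ) * (π x * ∑ y ∈ Ω, c x y * (α x - α y)^2 * (u i y)^2)
        = (Ω.card : ℝ) * (∑ y ∈ Ω, c x y * (α x - α y)^2 * (u i y)^2) * π x := by ring
    linarith
  have hFsqsum : ∀ i ∈ Finset.Icc 1 n, Summable (fun x => (F i x)^2 / π x) := by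
    intro i hi
    refine Summable.of_nonneg_of_le
      (fun x => div_nonneg (sq_nonneg _) (hπpos x).le) (hFsqle i hi) ?_
    refine Summable.mul_left _ (summable_sum fun y _ => ?_)
    exact (hslice y).mul_right _
  have horthoF : ∀ i ∈ Finset.Icc 1 n, ∀ j ∈ Finset.Icc 1 n,
      ∑ x ∈ Ω, π x * u i x * u j x = if i = j then 1 else 0 := by
    intro i hi j hj
    rw [Finset.mem_Icc] at hi hj
    rw [← hortho i j hi.1 hi.2 hj.1 hj.2]
    exact (tsum_eq_sum fun x hx => by
      rw [hu0 i (Finset.mem_Icc.mpr hi) x hx, mul_zero, zero_mul]).symm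
  have hBessel : ∀ i ∈ Finset.Icc 1 n,
      ∑ j ∈ Finset.Icc 1 n, (B2 i j)^2 ≤ ∑' x, (F i x)^2 / π x := by
    intro i hi
    set h : V → ℝ := fun x => ∑ j ∈ Finset.Icc 1 n, B2 i j * u j x with hhdef
    have hh0 : ∀ x ∉ Ω, h x = 0 := fun x hx =>
      Finset.sum_eq_zero fun j hj => by rw [hu0 j hj x hx, mul_zero]
    have hs1 : Summable (fun x => (F i x)^2 / π x) := hFsqsum i hi
    have hs2 : Summable (fun x => F i x * h x) :=
      summable_of_ne_finset_zero (s := Ω) fun x hx => by rw [hh0 x hx, mul_zero]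
    have hs3 : Summable (fun x => π x * h x ^ 2) :=
      summable_of_ne_finset_zero (s := Ω) fun x hx => by rw [hh0 x hx]; ring
    have key : ∀ x, π x * (F i x / π x - h x)^2
        = (F i x)^2 / π x - 2 * (F i x * h x) + π x * h x^2 := by
      intro x
      field_simp [hπne x]
      ring
    have hnn : (0:ℝ) ≤ ∑' x, π x * (F i x / π x - h x)^2 :=
      tsum_nonneg fun x => mul_nonneg (hπpos x).le (sq_nonneg _)
    have hexp : ∑' x, π x * (F i x / π x - h x)^2
        = (∑' x, (F i x)^2 / π x) - 2 * (∑' x, F i x * h x) + ∑' x, π x * h x^2 := by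
      rw [tsum_congr key, Summable.tsum_add (hs1.sub (hs2.mul_left 2)) hs3,
        Summable.tsum_sub hs1 (hs2.mul_left 2), tsum_mul_left]
    have hfh : ∑' x, F i x * h x = ∑ j ∈ Finset.Icc 1 n, (B2 i j)^2 := by
      rw [tsum_eq_sum (s := Ω) (fun x hx => by rw [hh0 x hx, mul_zero])]
      calc ∑ x ∈ Ω, F i x * h x
          = ∑ x ∈ Ω, ∑ j ∈ Finset.Icc 1 n, B2 i j * (u j x * F i x) := by
            refine Finset.sum_congr rfl fun x _ => ?_
            simp only [hhdef]
            rw [Finset.mul_sum]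
            exact Finset.sum_congr rfl fun j _ => by ring
        _ = ∑ j ∈ Finset.Icc 1 n, B2 i j * ∑ x ∈ Ω, u j x * F i x := by
            rw [Finset.sum_comm]
            exact Finset.sum_congr rfl fun j _ => by rw [Finset.mul_sum]
        _ = ∑ j ∈ Finset.Icc 1 n, (B2 i j)^2 :=
            Finset.sum_congr rfl fun j _ => by simp only [hB2def]; ring
    have hhh : ∑' x, π x * h x^2 = ∑ j ∈ Finset.Icc 1 n, (B2 i j)^2 := by
      rw [tsum_eq_sum (s := Ω) (fun x hx => by rw [hh0 x hx]; ring)]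
      calc ∑ x ∈ Ω, π x * h x^2
          = ∑ x ∈ Ω, ∑ j ∈ Finset.Icc 1 n, ∑ l ∈ Finset.Icc 1 n,
              B2 i j * B2 i l * (π x * u j x * u l x) := by
            refine Finset.sum_congr rfl fun x _ => ?_
            simp only [hhdef]
            rw [sq, Finset.sum_mul_sum, Finset.mul_sum]
            refine Finset.sum_congr rfl fun j _ => ?_
            rw [Finset.mul_sum]
            exact Finset.sum_congr rfl fun l _ => by ring
        _ = ∑ j ∈ Finset.Icc 1 n, ∑ l ∈ Finset.Icc 1 n,
              B2 i j * B2 i l * ∑ x ∈ Ω, π x * u j x * u l x := by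
            rw [Finset.sum_comm]
            refine Finset.sum_congr rfl fun j _ => ?_
            rw [Finset.sum_comm]
            refine Finset.sum_congr rfl fun l _ => ?_
            rw [← Finset.mul_sum]
        _ = ∑ j ∈ Finset.Icc 1 n, (B2 i j)^2 := by
            refine Finset.sum_congr rfl fun j hj => ?_
            have e : ∀ l ∈ Finset.Icc 1 n,
                B2 i j * B2 i l * ∑ x ∈ Ω, π x * u j x * u l x
                  = if j = l then (B2 i j)^2 else 0 := by
              intro l hl
              rw [horthoF j hj l hl]
              split_ifs with hjl
              · subst hjl; ring
              · ring
            rw [Finset.sum_congr rfl e, Finset.sum_ite_eq, if_pos hj]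
    linarith
  have heigF : ∀ j ∈ Finset.Icc 1 n, ∀ x ∈ Ω,
      ∑ y ∈ Ω, c x y * u j y = π x * u j x * (1 - lam j) := by
    intro j hj x hx
    have hjm := hj
    rw [Finset.mem_Icc] at hjm
    have h := heig j hjm.1 hjm.2 x hx
    have h1 : (fun y => c x y / π x * (u j x - u j y))
        = fun y => c x y * (u j x / π x) - (c x y * u j y) / π x := by
      funext y; field_simp
    have hs2' : Summable (fun y => c x y * u j y) :=
      summable_of_ne_finset_zero (s := Ω) fun y hy => by rw [hu0 j hj y hy, mul_zero]
    have hs2 : Summable fun y => (c x y * u j y) / π x := hs2'.div_const _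
    rw [h1, Summable.tsum_sub ((hsum x).mul_right _) hs2, tsum_mul_right, tsum_div_const,
      tsum_eq_sum (f := fun y => c x y * u j y) (s := Ω) (fun y hy => by show c x y * u j y = 0; rw [hu0 j hj y hy, mul_zero]), ← hπ] at h
    -- h : π x * (u j x / π x) - (∑ y ∈ Ω, c x y * u j y) / π x = lam j * u j x
    rw [mul_div_cancel₀ _ (hπne x)] at h
    have h3 : ∑ y ∈ Ω, c x y * u j y = (u j x - lam j * u j x) * π x := by
      rw [← div_eq_iff (hπne x)]
      linarith
    rw [h3]; ring
  have hBeq : ∀ i ∈ Finset.Icc 1 n, ∀ j ∈ Finset.Icc 1 n,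
      B2 i j = (lam j - lam i) * A2 i j := by
    intro i hi j hj
    have e1 : B2 i j = (∑ x ∈ Ω, ∑ y ∈ Ω, c x y * α x * u j x * u i y)
        - ∑ x ∈ Ω, ∑ y ∈ Ω, c x y * α y * u j x * u i y := by
      simp only [hB2def, hFdef]
      rw [← Finset.sum_sub_distrib]
      refine Finset.sum_congr rfl fun x _ => ?_
      rw [Finset.mul_sum, ← Finset.sum_sub_distrib]
      exact Finset.sum_congr rfl fun y _ => by ring
    have e2 : ∑ x ∈ Ω, ∑ y ∈ Ω, c x y * α x * u j x * u i y
        = ∑ x ∈ Ω, π x * α x * u i x * u j x * (1 - lam i) := by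
      refine Finset.sum_congr rfl fun x hx => ?_
      have e : ∑ y ∈ Ω, c x y * α x * u j x * u i y
          = (α x * u j x) * ∑ y ∈ Ω, c x y * u i y := by
        rw [Finset.mul_sum]
        exact Finset.sum_congr rfl fun y _ => by ring
      rw [e, heigF i hi x hx]; ring
    have e3 : ∑ x ∈ Ω, ∑ y ∈ Ω, c x y * α y * u j x * u i y
        = ∑ x ∈ Ω, π x * α x * u i x * u j x * (1 - lam j) := by
      rw [Finset.sum_comm]
      refine Finset.sum_congr rfl fun y hy => ?_
      have e : ∑ x ∈ Ω, c x y * α y * u j x * u i y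
          = (α y * u i y) * ∑ x ∈ Ω, c y x * u j x := by
        rw [Finset.mul_sum]
        refine Finset.sum_congr rfl fun x _ => ?_
        rw [hsymm x y]; ring
      rw [e, heigF j hj y hy]; ring
    rw [e1, e2, e3]
    simp only [hA2def]
    rw [Finset.mul_sum, ← Finset.sum_sub_distrib]
    exact Finset.sum_congr rfl fun x _ => by ring
  -- completeness of the eigenbasis on Ω
  have hdelta : ∀ x ∈ Ω, ∀ x' ∈ Ω,
      ∑ j ∈ Finset.Icc 1 n, u j x * u j x' = if x = x' then 1 / π x else 0 := by
    have hcard : Fintype.card ↥(Finset.Icc 1 n) = Fintype.card ↥Ω := by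
      rw [Fintype.card_coe, Fintype.card_coe, Nat.card_Icc, ← hn]
      omega
    set e : ↥(Finset.Icc 1 n) ≃ ↥Ω := Fintype.equivOfCardEq hcard with hedef
    set M : Matrix ↥Ω ↥(Finset.Icc 1 n) ℝ :=
      Matrix.of (fun x j => Real.sqrt (π ↑x) * u ↑j ↑x) with hMdef
    have hMTM : Mᵀ * M = 1 := by
      ext j l
      rw [Matrix.mul_apply, Matrix.one_apply]
      simp only [hMdef, Matrix.transpose_apply, Matrix.of_apply]
      have e1 : ∑ x : ↥Ω, Real.sqrt (π ↑x) * u ↑j ↑x * (Real.sqrt (π ↑x) * u ↑l ↑x)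
          = ∑ x : ↥Ω, π ↑x * u ↑j ↑x * u ↑l ↑x := by
        refine Finset.sum_congr rfl fun x _ => ?_
        rw [show Real.sqrt (π ↑x) * u ↑j ↑x * (Real.sqrt (π ↑x) * u ↑l ↑x)
            = Real.sqrt (π ↑x) * Real.sqrt (π ↑x) * (u ↑j ↑x * u ↑l ↑x) from by ring,
          Real.mul_self_sqrt (hπpos ↑x).le]
        ring
      rw [e1]
      have e2 : ∑ x : ↥Ω, π ↑x * u ↑j ↑x * u ↑l ↑x
          = ∑ x ∈ Ω, π x * u ↑j x * u ↑l x :=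
        Finset.sum_coe_sort Ω (fun v => π v * u ↑j v * u ↑l v)
      rw [e2, horthoF ↑j j.2 ↑l l.2]
      by_cases hjl : j = l
      · rw [if_pos hjl, if_pos (by rw [hjl])]
      · rw [if_neg hjl, if_neg (fun hc => hjl (Subtype.ext hc))]
    have hMMT : M * Mᵀ = 1 := (Matrix.mul_eq_one_comm_of_equiv e.symm).mpr hMTM
    intro x hx x' hx'
    have h2 := congrFun (congrFun hMMT ⟨x, hx⟩) ⟨x', hx'⟩
    rw [Matrix.mul_apply, Matrix.one_apply] at h2
    simp only [hMdef, Matrix.transpose_apply, Matrix.of_apply] at h2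
    have hco : ∑ j : ↥(Finset.Icc 1 n), u ↑j x * u ↑j x'
        = ∑ j ∈ Finset.Icc 1 n, u j x * u j x' :=
      Finset.sum_coe_sort (Finset.Icc 1 n) (fun j => u j x * u j x')
    by_cases hxx : x = x'
    · subst hxx
      rw [if_pos rfl] at h2
      rw [if_pos rfl, ← hco]
      have h3 : ∑ j : ↥(Finset.Icc 1 n),
          Real.sqrt (π x) * u ↑j x * (Real.sqrt (π x) * u ↑j x)
          = π x * ∑ j : ↥(Finset.Icc 1 n), u ↑j x * u ↑j x := by
        rw [Finset.mul_sum]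
        refine Finset.sum_congr rfl fun j _ => ?_
        rw [show Real.sqrt (π x) * u ↑j x * (Real.sqrt (π x) * u ↑j x)
            = Real.sqrt (π x) * Real.sqrt (π x) * (u ↑j x * u ↑j x) from by ring,
          Real.mul_self_sqrt (hπpos x).le]
      rw [h3] at h2
      rw [eq_div_iff (hπne x)]
      linarith
    · rw [if_neg (fun hc => hxx (congrArg Subtype.val hc))] at h2
      rw [if_neg hxx, ← hco]
      have h3 : ∑ j : ↥(Finset.Icc 1 n),
          Real.sqrt (π x) * u ↑j x * (Real.sqrt (π x') * u ↑j x')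
          = (Real.sqrt (π x) * Real.sqrt (π x'))
            * ∑ j : ↥(Finset.Icc 1 n), u ↑j x * u ↑j x' := by
        rw [Finset.mul_sum]
        exact Finset.sum_congr rfl fun j _ => by ring
      rw [h3] at h2
      have hpos : (0:ℝ) < Real.sqrt (π x) * Real.sqrt (π x') :=
        mul_pos (Real.sqrt_pos.mpr (hπpos x)) (Real.sqrt_pos.mpr (hπpos x'))
      exact (mul_eq_zero.mp h2).resolve_left hpos.ne'
  have hcomp : ∀ i ∈ Finset.Icc 1 n, ∀ x ∈ Ω,
      ∑ j ∈ Finset.Icc 1 n, A2 i j * u j x = α x * u i x := by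
    intro i hi x hx
    calc ∑ j ∈ Finset.Icc 1 n, A2 i j * u j x
        = ∑ j ∈ Finset.Icc 1 n, ∑ x' ∈ Ω, (π x' * α x' * u i x') * (u j x' * u j x) := by
          refine Finset.sum_congr rfl fun j _ => ?_
          simp only [hA2def]
          rw [Finset.sum_mul]
          exact Finset.sum_congr rfl fun x' _ => by ring
      _ = ∑ x' ∈ Ω, (π x' * α x' * u i x') * ∑ j ∈ Finset.Icc 1 n, u j x' * u j x := by
          rw [Finset.sum_comm]
          exact Finset.sum_congr rfl fun x' _ => by rw [Finset.mul_sum]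
      _ = α x * u i x := by
          rw [Finset.sum_congr rfl fun x' hx' => by rw [hdelta x' hx' x hx]]
          simp only [mul_ite, mul_zero]
          rw [Finset.sum_ite_eq' Ω x (fun x' => π x' * α x' * u i x' * (1 / π x'))]
          rw [if_pos hx]
          field_simp [hπne x]
  have haeq : ∀ i ∈ Finset.Icc 1 n,
      ∑ x ∈ Ω, α x * u i x * F i x = ∑ j ∈ Finset.Icc 1 n, A2 i j * B2 i j := by
    intro i hi
    refine Eq.symm ?_
    calc ∑ j ∈ Finset.Icc 1 n, A2 i j * B2 i j
        = ∑ j ∈ Finset.Icc 1 n, ∑ x ∈ Ω, A2 i j * (u j x * F i x) := by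
          refine Finset.sum_congr rfl fun j _ => ?_
          simp only [hB2def]
          rw [Finset.mul_sum]
      _ = ∑ x ∈ Ω, (∑ j ∈ Finset.Icc 1 n, A2 i j * u j x) * F i x := by
          rw [Finset.sum_comm]
          refine Finset.sum_congr rfl fun x _ => ?_
          rw [Finset.sum_mul]
          exact Finset.sum_congr rfl fun j _ => by ring
      _ = ∑ x ∈ Ω, α x * u i x * F i x :=
          Finset.sum_congr rfl fun x hx => by rw [hcomp i hi x hx]
  -- evaluation of the LHS bracket
  have hLHS : ∀ i ∈ Finset.Icc 1 n,
      (∑' x : V, π x * ((1/2) * ∑' y : V, c x y / π x * (α x - α y) ^ 2) * (u i x) ^ 2)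
        - (1/4) * ∑' p : V × V, c p.1 p.2 * (α p.1 - α p.2) ^ 2 * (u i p.1 - u i p.2) ^ 2
      = ∑ x ∈ Ω, α x * u i x * F i x := by
    intro i hi
    -- summability of the three product pieces
    have hg1slice : ∀ x, Summable (fun y => c x y * (α x - α y)^2 * (u i x)^2) :=
      fun x => (hα2 x).mul_right _
    have hg1s : Summable (fun p : V × V => c p.1 p.2 * (α p.1 - α p.2)^2 * (u i p.1)^2) := by
      refine (summable_prod_of_nonneg (fun p =>
        mul_nonneg (mul_nonneg (hnonneg _ _) (sq_nonneg _)) (sq_nonneg _))).mpr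
        ⟨fun x => hg1slice x, ?_⟩
      refine (summable_of_ne_finset_zero (s := Ω)
        (f := fun x => S x * (u i x)^2) fun x hx => by
          show S x * (u i x)^2 = 0
          rw [hu0 i hi x hx]; ring).congr fun x => ?_
      show S x * (u i x)^2 = ∑' y, c x y * (α x - α y)^2 * (u i x)^2
      rw [← tsum_mul_right]
    have hg3slice : ∀ x, Summable (fun y => c x y * (α x - α y)^2 * (u i y)^2) :=
      fun x => summable_of_ne_finset_zero (s := Ω) fun y hy => by rw [hu0 i hi y hy]; ring
    have hsumy : ∀ y, Summable (fun x => c x y * (α x - α y)^2 * (u i y)^2) :=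
      fun y => (hslice y).mul_right _
    have hg3s : Summable (fun p : V × V => c p.1 p.2 * (α p.1 - α p.2)^2 * (u i p.2)^2) := by
      refine (summable_prod_of_nonneg (fun p =>
        mul_nonneg (mul_nonneg (hnonneg _ _) (sq_nonneg _)) (sq_nonneg _))).mpr
        ⟨fun x => hg3slice x, ?_⟩
      refine (summable_sum (s := Ω) (f := fun y x => c x y * (α x - α y)^2 * (u i y)^2)
        fun y _ => hsumy y).congr fun x => ?_
      show ∑ y ∈ Ω, c x y * (α x - α y)^2 * (u i y)^2 = ∑' y, c x y * (α x - α y)^2 * (u i y)^2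
      rw [tsum_eq_sum (s := Ω) (fun y hy => by rw [hu0 i hi y hy]; ring)]
    have hg2s : Summable (fun p : V × V =>
        c p.1 p.2 * (α p.1 - α p.2)^2 * (u i p.1 * u i p.2)) := by
      refine summable_of_ne_finset_zero (s := Ω ×ˢ Ω) fun p hp => ?_
      rw [Finset.mem_product] at hp
      by_cases h1 : p.1 ∈ Ω
      · have h2 : p.2 ∉ Ω := fun h2 => hp ⟨h1, h2⟩
        rw [hu0 i hi p.2 h2]; ring
      · rw [hu0 i hi p.1 h1]; ring
    have hgs : Summable (fun p : V × V =>
        c p.1 p.2 * (α p.1 - α p.2)^2 * (u i p.1 - u i p.2)^2) := by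
      refine Summable.of_nonneg_of_le (fun p =>
        mul_nonneg (mul_nonneg (hnonneg _ _) (sq_nonneg _)) (sq_nonneg _))
        (fun p => ?_) ((hg1s.add hg3s).mul_left 2)
      have hm : (0:ℝ) ≤ c p.1 p.2 * (α p.1 - α p.2)^2 :=
        mul_nonneg (hnonneg _ _) (sq_nonneg _)
      have hq : (u i p.1 - u i p.2)^2 ≤ 2*(u i p.1)^2 + 2*(u i p.2)^2 := by
        nlinarith [sq_nonneg (u i p.1 + u i p.2)]
      calc c p.1 p.2 * (α p.1 - α p.2)^2 * (u i p.1 - u i p.2)^2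
          ≤ c p.1 p.2 * (α p.1 - α p.2)^2 * (2*(u i p.1)^2 + 2*(u i p.2)^2) :=
            mul_le_mul_of_nonneg_left hq hm
        _ = 2 * (c p.1 p.2 * (α p.1 - α p.2)^2 * (u i p.1)^2
              + c p.1 p.2 * (α p.1 - α p.2)^2 * (u i p.2)^2) := by ring
    -- evaluate the three pieces
    have e1 : ∑' p : V × V, c p.1 p.2 * (α p.1 - α p.2)^2 * (u i p.1)^2
        = ∑ x ∈ Ω, (u i x)^2 * S x := by
      rw [Summable.tsum_prod' hg1s hg1slice]
      calc ∑' x, ∑' y, c x y * (α x - α y)^2 * (u i x)^2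
          = ∑' x, S x * (u i x)^2 := tsum_congr fun x => tsum_mul_right
        _ = ∑ x ∈ Ω, S x * (u i x)^2 :=
            tsum_eq_sum (fun x hx => by rw [hu0 i hi x hx]; ring)
        _ = ∑ x ∈ Ω, (u i x)^2 * S x := Finset.sum_congr rfl fun x _ => by ring
    have e3 : ∑' p : V × V, c p.1 p.2 * (α p.1 - α p.2)^2 * (u i p.2)^2
        = ∑ x ∈ Ω, (u i x)^2 * S x := by
      rw [Summable.tsum_prod' hg3s hg3slice]
      calc ∑' x, ∑' y, c x y * (α x - α y)^2 * (u i y)^2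
          = ∑' x, ∑ y ∈ Ω, c x y * (α x - α y)^2 * (u i y)^2 :=
            tsum_congr fun x => tsum_eq_sum (fun y hy => by rw [hu0 i hi y hy]; ring)
        _ = ∑ y ∈ Ω, ∑' x, c x y * (α x - α y)^2 * (u i y)^2 :=
            Summable.tsum_finsetSum fun y _ => hsumy y
        _ = ∑ y ∈ Ω, (u i y)^2 * S y := by
            refine Finset.sum_congr rfl fun y _ => ?_
            rw [tsum_mul_right]
            have : ∑' x, c x y * (α x - α y)^2 = S y := by
              refine tsum_congr fun x => ?_
              rw [hsymm x y, show (α x - α y)^2 = (α y - α x)^2 from by ring]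
            rw [this]; ring
    have e2 : ∑' p : V × V, c p.1 p.2 * (α p.1 - α p.2)^2 * (u i p.1 * u i p.2)
        = ∑ x ∈ Ω, ∑ y ∈ Ω, c x y * (α x - α y)^2 * (u i x * u i y) := by
      have hg2slice : ∀ x, Summable (fun y => c x y * (α x - α y)^2 * (u i x * u i y)) :=
        fun x => summable_of_ne_finset_zero (s := Ω) fun y hy => by rw [hu0 i hi y hy]; ring
      rw [Summable.tsum_prod' hg2s hg2slice]
      calc ∑' x, ∑' y, c x y * (α x - α y)^2 * (u i x * u i y)
          = ∑' x, ∑ y ∈ Ω, c x y * (α x - α y)^2 * (u i x * u i y) :=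
            tsum_congr fun x => tsum_eq_sum (fun y hy => by rw [hu0 i hi y hy]; ring)
        _ = ∑ x ∈ Ω, ∑ y ∈ Ω, c x y * (α x - α y)^2 * (u i x * u i y) :=
            tsum_eq_sum (fun x hx => Finset.sum_eq_zero fun y _ => by
              rw [hu0 i hi x hx]; ring)
    -- pointwise decomposition and the value of the product tsum
    have hT2 : ∑' p : V × V, c p.1 p.2 * (α p.1 - α p.2)^2 * (u i p.1 - u i p.2)^2
        = 2 * (∑ x ∈ Ω, (u i x)^2 * S x)
          - 2 * ∑ x ∈ Ω, ∑ y ∈ Ω, c x y * (α x - α y)^2 * (u i x * u i y) := by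
      have hpt : ∀ p : V × V, c p.1 p.2 * (α p.1 - α p.2)^2 * (u i p.1 - u i p.2)^2
          = (c p.1 p.2 * (α p.1 - α p.2)^2 * (u i p.1)^2
              - 2 * (c p.1 p.2 * (α p.1 - α p.2)^2 * (u i p.1 * u i p.2)))
            + c p.1 p.2 * (α p.1 - α p.2)^2 * (u i p.2)^2 := fun p => by ring
      rw [tsum_congr hpt, Summable.tsum_add (hg1s.sub (hg2s.mul_left 2)) hg3s,
        Summable.tsum_sub hg1s (hg2s.mul_left 2), tsum_mul_left, e1, e2, e3]
      ring
    have hT1 : (∑' x : V, π x * ((1/2) * ∑' y : V, c x y / π x * (α x - α y) ^ 2) * (u i x) ^ 2)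
        = (1/2) * ∑ x ∈ Ω, (u i x)^2 * S x := by
      rw [tsum_eq_sum (s := Ω) (fun x hx => by rw [hu0 i hi x hx]; ring), Finset.mul_sum]
      refine Finset.sum_congr rfl fun x _ => ?_
      have h1 : ∑' y, c x y / π x * (α x - α y)^2 = S x / π x := by
        rw [tsum_congr (f := fun y => c x y / π x * (α x - α y)^2)
          (g := fun y => (c x y * (α x - α y)^2) / π x) (fun y => by ring), tsum_div_const]
      rw [h1]
      field_simp [hπne x]
    have hsym14 : ∑ x ∈ Ω, α x * u i x * F i x
        = (1/2) * ∑ x ∈ Ω, ∑ y ∈ Ω, c x y * (α x - α y)^2 * (u i x * u i y) := by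
      have expand : ∑ x ∈ Ω, α x * u i x * F i x
          = ∑ x ∈ Ω, ∑ y ∈ Ω, c x y * (α x - α y) * α x * (u i x * u i y) := by
        refine Finset.sum_congr rfl fun x _ => ?_
        simp only [hFdef]
        rw [Finset.mul_sum]
        exact Finset.sum_congr rfl fun y _ => by ring
      have hswap : ∑ x ∈ Ω, ∑ y ∈ Ω, c x y * (α x - α y) * α x * (u i x * u i y)
          = ∑ x ∈ Ω, ∑ y ∈ Ω, c y x * (α y - α x) * α y * (u i y * u i x) :=
        Finset.sum_comm
      have hkey : ∀ x ∈ Ω, ∀ y ∈ Ω,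
          c x y * (α x - α y) * α x * (u i x * u i y)
            + c y x * (α y - α x) * α y * (u i y * u i x)
          = c x y * (α x - α y)^2 * (u i x * u i y) := by
        intro x _ y _
        rw [hsymm y x]; ring
      have h2 : 2 * ∑ x ∈ Ω, ∑ y ∈ Ω, c x y * (α x - α y) * α x * (u i x * u i y)
          = ∑ x ∈ Ω, ∑ y ∈ Ω, c x y * (α x - α y)^2 * (u i x * u i y) := by
        rw [two_mul]
        nth_rewrite 2 [hswap]
        rw [← Finset.sum_add_distrib]
        refine Finset.sum_congr rfl fun x hx => ?_
        rw [← Finset.sum_add_distrib]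
        exact Finset.sum_congr rfl fun y hy => hkey x hx y hy
      rw [expand]
      linarith
    rw [hT1, hT2, hsym14]
    ring
  have hsymA : ∀ i j, A2 i j = A2 j i := by
    intro i j
    simp only [hA2def]
    exact Finset.sum_congr rfl fun x _ => by ring
  have hsub : ∀ i ∈ Finset.Icc 1 k, i ∈ Finset.Icc 1 n := by
    intro i hi
    rw [Finset.mem_Icc] at hi ⊢
    omega
  calc ∑ i ∈ Finset.Icc 1 k, (lam (k+1) - lam i) ^ 2 *
        ((∑' x : V, π x * ((1/2) * ∑' y : V, c x y / π x * (α x - α y) ^ 2) * (u i x) ^ 2)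
          - (1/4) * ∑' p : V × V, c p.1 p.2 * (α p.1 - α p.2) ^ 2 * (u i p.1 - u i p.2) ^ 2)
      = ∑ i ∈ Finset.Icc 1 k, (lam (k+1) - lam i) ^ 2 *
          ∑ j ∈ Finset.Icc 1 n, (lam j - lam i) * (A2 i j)^2 := by
        refine Finset.sum_congr rfl fun i hi => ?_
        rw [hLHS i (hsub i hi), haeq i (hsub i hi)]
        congr 1
        refine Finset.sum_congr rfl fun j hj => ?_
        rw [hBeq i (hsub i hi) j hj]
        ring
    _ ≤ ∑ i ∈ Finset.Icc 1 k, (lam (k+1) - lam i) *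
          ∑ j ∈ Finset.Icc 1 n, (lam j - lam i)^2 * (A2 i j)^2 := by
        rw [← sub_nonneg, ← Finset.sum_sub_distrib]
        set D : ℕ → ℕ → ℝ := fun i j =>
          (lam (k+1) - lam i) * ((lam j - lam i)^2 * (A2 i j)^2)
            - (lam (k+1) - lam i)^2 * ((lam j - lam i) * (A2 i j)^2) with hDdef
        have hterm : ∀ i ∈ Finset.Icc 1 k,
            (lam (k+1) - lam i) * (∑ j ∈ Finset.Icc 1 n, (lam j - lam i)^2 * (A2 i j)^2)
              - (lam (k+1) - lam i)^2 * ∑ j ∈ Finset.Icc 1 n, (lam j - lam i) * (A2 i j)^2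
            = ∑ j ∈ Finset.Icc 1 n, D i j := by
          intro i _
          rw [Finset.mul_sum, Finset.mul_sum, ← Finset.sum_sub_distrib]
        rw [Finset.sum_congr rfl hterm]
        have hsplit : Finset.Icc 1 n = Finset.Icc 1 k ∪ Finset.Icc (k+1) n := by
          ext m
          simp only [Finset.mem_Icc, Finset.mem_union]
          omega
        have hdisj : Disjoint (Finset.Icc 1 k) (Finset.Icc (k+1) n) := by
          rw [Finset.disjoint_left]
          intro a ha hb
          rw [Finset.mem_Icc] at ha hb
          omega
        have hsum2 : ∀ i ∈ Finset.Icc 1 k, ∑ j ∈ Finset.Icc 1 n, D i j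
            = ∑ j ∈ Finset.Icc 1 k, D i j + ∑ j ∈ Finset.Icc (k+1) n, D i j := by
          intro i _
          rw [hsplit, Finset.sum_union hdisj]
        rw [Finset.sum_congr rfl hsum2, Finset.sum_add_distrib]
        have hzero : ∑ i ∈ Finset.Icc 1 k, ∑ j ∈ Finset.Icc 1 k, D i j = 0 := by
          have hanti : ∀ i ∈ Finset.Icc 1 k, ∀ j ∈ Finset.Icc 1 k, D i j + D j i = 0 := by
            intro i _ j _
            simp only [hDdef]
            rw [hsymA j i]
            ring
          have hcomm : ∑ i ∈ Finset.Icc 1 k, ∑ j ∈ Finset.Icc 1 k, D i j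
              = ∑ i ∈ Finset.Icc 1 k, ∑ j ∈ Finset.Icc 1 k, D j i := Finset.sum_comm
          have h2 : ∑ i ∈ Finset.Icc 1 k, ∑ j ∈ Finset.Icc 1 k, (D i j + D j i) = 0 :=
            Finset.sum_eq_zero fun i hi => Finset.sum_eq_zero fun j hj => hanti i hi j hj
          have h3 : ∑ i ∈ Finset.Icc 1 k, ∑ j ∈ Finset.Icc 1 k, (D i j + D j i)
              = (∑ i ∈ Finset.Icc 1 k, ∑ j ∈ Finset.Icc 1 k, D i j)
                + ∑ i ∈ Finset.Icc 1 k, ∑ j ∈ Finset.Icc 1 k, D j i := by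
            rw [← Finset.sum_add_distrib]
            exact Finset.sum_congr rfl fun i _ => Finset.sum_add_distrib
          linarith
        have hpos : 0 ≤ ∑ i ∈ Finset.Icc 1 k, ∑ j ∈ Finset.Icc (k+1) n, D i j := by
          refine Finset.sum_nonneg fun i hi => Finset.sum_nonneg fun j hj => ?_
          rw [Finset.mem_Icc] at hi hj
          have h1 : 0 ≤ lam (k+1) - lam i := by
            have := hmono i (k+1) hi.1 (by omega) (by omega)
            linarith
          have h2 : 0 ≤ lam j - lam i := by
            have := hmono i j hi.1 (by omega) (by omega)
            linarith
          have h3 : 0 ≤ lam j - lam (k+1) := by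
            have := hmono (k+1) j (by omega) hj.1 hj.2
            linarith
          have hD : D i j = (A2 i j)^2 *
              ((lam (k+1) - lam i) * ((lam j - lam i) * (lam j - lam (k+1)))) := by
            simp only [hDdef]
            ring
          rw [hD]
          exact mul_nonneg (sq_nonneg _) (mul_nonneg h1 (mul_nonneg h2 h3))
        linarith
    _ ≤ ∑ i ∈ Finset.Icc 1 k, (lam (k+1) - lam i) * (∑' x, (F i x)^2 / π x) := by
        refine Finset.sum_le_sum fun i hi => ?_
        have him := hsub i hi
        have hβ : 0 ≤ lam (k+1) - lam i := by
          rw [Finset.mem_Icc] at hi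
          have := hmono i (k+1) hi.1 (by omega) (by omega)
          linarith
        refine mul_le_mul_of_nonneg_left ?_ hβ
        calc ∑ j ∈ Finset.Icc 1 n, (lam j - lam i)^2 * (A2 i j)^2
            = ∑ j ∈ Finset.Icc 1 n, (B2 i j)^2 := Finset.sum_congr rfl fun j hj => by
              rw [hBeq i him j hj]; ring
          _ ≤ ∑' x, (F i x)^2 / π x := hBessel i him
    _ = ∑ i ∈ Finset.Icc 1 k, (lam (k+1) - lam i) *
          (∑' x : V, π x *
            (u i x * (∑' y : V, c x y / π x * (α x - α y))
              - ∑' y : V, c x y / π x * (α x - α y) * (u i x - u i y)) ^ 2) := by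
        refine Finset.sum_congr rfl fun i hi => ?_
        congr 1
        refine tsum_congr fun x => ?_
        rw [hFval i (hsub i hi) x]
        field_simp [hπne x]
end

section
/- Let λ_min ≤ λ_1 ≤ ⋯ ≤ λ_{k+1} be real numbers with λ_k ≤ 1 + C for some C > 0, λ_1 < λ_{k+1}, Σ_{i=1}^k(1−λ_i) > 0, and suppose Σ_{i=1}^k (λ_{k+1}−λ_i)²(1−λ_i) ≤ C·Σ_{i=1}^k (λ_{k+1}−λ_i)(λ_i−λ_min). Then λ_{k+1} − λ_min ≤ [Σ_{i=1}^k (λ_i−λ_min)(1+C−λ_i)] / [Σ_{i=1}^k (1−λ_i)]. -/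
/-- discrete Yang second inequality: if `λ_min ≤ λ_1 ≤ ⋯ ≤ λ_{k+1}`,
`λ_k ≤ 1 + C` with `C > 0`, `λ_1 < λ_{k+1}`, `Σ_{i=1}^k (1−λ_i) > 0`, and the Yang-type
inequality holds, then
`λ_{k+1} − λ_min ≤ [Σ_{i=1}^k (λ_i−λ_min)(1+C−λ_i)] / [Σ_{i=1}^k (1−λ_i)]`. -/
theorem yang_second_inequality (C lamMin : ℝ) (k : ℕ) (lam : ℕ → ℝ)
    (hC : 0 < C) (hk : 1 ≤ k)
    (hmin : lamMin ≤ lam 1)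
    (hmono : ∀ i j, 1 ≤ i → i ≤ j → j ≤ k + 1 → lam i ≤ lam j)
    (hupper : lam k ≤ 1 + C)
    (hlt : lam 1 < lam (k+1))
    (hpos : 0 < ∑ i ∈ Finset.Icc 1 k, (1 - lam i))
    (hyang : ∑ i ∈ Finset.Icc 1 k, (lam (k+1) - lam i) ^ 2 * (1 - lam i)
      ≤ C * ∑ i ∈ Finset.Icc 1 k, (lam (k+1) - lam i) * (lam i - lamMin)) :
    lam (k+1) - lamMin ≤
      (∑ i ∈ Finset.Icc 1 k, (lam i - lamMin) * (1 + C - lam i)) /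
        (∑ i ∈ Finset.Icc 1 k, (1 - lam i)) := by
  set s := Finset.Icc 1 k with hs
  set f : ℕ → ℝ := fun i => lam (k+1) - lam i with hf
  set g : ℕ → ℝ := fun i => (lam (k+1) - lam i) * (1 - lam i) - C * (lam i - lamMin) with hg
  have hmem : ∀ i ∈ s, 1 ≤ i ∧ i ≤ k := by
    intro i hi; exact Finset.mem_Icc.mp hi
  -- f is antitone on s
  have hfa : ∀ i ∈ s, ∀ j ∈ s, i ≤ j → f j ≤ f i := by
    intro i hi j hj hij
    obtain ⟨hi1, hik⟩ := hmem i hi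
    obtain ⟨hj1, hjk⟩ := hmem j hj
    have := hmono i j hi1 hij (le_trans hjk (Nat.le_succ k))
    simp only [hf]; linarith
  -- g is antitone on s
  have hga : ∀ i ∈ s, ∀ j ∈ s, i ≤ j → g j ≤ g i := by
    intro i hi j hj hij
    obtain ⟨hi1, hik⟩ := hmem i hi
    obtain ⟨hj1, hjk⟩ := hmem j hj
    have hxy : lam i ≤ lam j := hmono i j hi1 hij (le_trans hjk (Nat.le_succ k))
    have hx : lam i ≤ 1 + C :=
      le_trans (hmono i k hi1 hik (Nat.le_succ k)) hupper
    have hy : lam j ≤ lam (k+1) := hmono j (k+1) hj1 (Nat.le_succ_of_le hjk) le_rfl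
    simp only [hg]
    nlinarith [mul_nonneg (sub_nonneg.mpr hxy) (sub_nonneg.mpr hy),
      mul_nonneg (sub_nonneg.mpr hxy) (sub_nonneg.mpr hx)]
  -- f and g monovary on s
  have hmv : MonovaryOn f g s := by
    intro i hi j hj hgij
    rcases le_total i j with h | h
    · rcases eq_or_lt_of_le h with rfl | h'
      · exact le_rfl
      · exact absurd (hga i hi j hj h) (not_le.mpr hgij)
    · exact hfa j hj i hi h
  -- Chebyshev
  have hcheb := hmv.sum_mul_sum_le_card_mul_sum
  -- Σ f*g ≤ 0
  have hfg : ∑ i ∈ s, f i * g i ≤ 0 := by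
    have heq : ∑ i ∈ s, f i * g i
        = ∑ i ∈ s, (lam (k+1) - lam i) ^ 2 * (1 - lam i)
          - C * ∑ i ∈ s, (lam (k+1) - lam i) * (lam i - lamMin) := by
      rw [Finset.mul_sum, ← Finset.sum_sub_distrib]
      exact Finset.sum_congr rfl (fun i _ => by simp only [hf, hg]; ring)
    rw [heq]; linarith
  -- Σ f > 0
  have hfpos : 0 < ∑ i ∈ s, f i := by
    apply Finset.sum_pos'
    · intro i hi
      obtain ⟨hi1, hik⟩ := hmem i hi
      have := hmono i (k+1) hi1 (Nat.le_succ_of_le hik) le_rfl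
      simp only [hf]; linarith
    · refine ⟨1, Finset.mem_Icc.mpr ⟨le_rfl, hk⟩, ?_⟩
      simp only [hf]; linarith
  -- Σ g ≤ 0
  have hgsum : ∑ i ∈ s, g i ≤ 0 := by
    have hcard : (0:ℝ) ≤ (s.card : ℝ) := Nat.cast_nonneg _
    have h1 : (s.card : ℝ) * ∑ i ∈ s, f i * g i ≤ 0 := mul_nonpos_of_nonneg_of_nonpos hcard hfg
    nlinarith
  -- conclude
  rw [le_div_iff₀ hpos]
  have heq2 : (lam (k+1) - lamMin) * ∑ i ∈ s, (1 - lam i)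
      - ∑ i ∈ s, (lam i - lamMin) * (1 + C - lam i) = ∑ i ∈ s, g i := by
    rw [Finset.mul_sum, ← Finset.sum_sub_distrib]
    exact Finset.sum_congr rfl (fun i _ => by simp only [hg]; ring)
  linarith
end

section
/- Let λ_min ≤ λ_1 ≤ ⋯ ≤ λ_{k+1} be real numbers with λ_k < λ_{k+1}, λ_k ≤ 1 + C for some C > 0, Σ_{i=1}^k(1−λ_i) ≥ 0, and suppose the Yang-type inequality Σ_{i=1}^k (λ_{k+1}−λ_i)²(1−λ_i) ≤ C·Σ_{i=1}^k (λ_{k+1}−λ_i)(λ_i−λ_min) holds. Then the Hile–Protter type inequality holds: Σ_{i=1}^k (λ_i−λ_min)/(λ_{k+1}−λ_i) ≥ (1/C)·Σ_{i=1}^k (1−λ_i). -/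
/-- Pure arithmetic core of the discrete Hile–Protter inequality. -/
lemma hp_aux (k : ℕ) (C A B S P Q R Y : ℝ) (hC : 0 < C) (hk : 1 ≤ k)
    (hSnn : 0 ≤ S) (hApos : 0 < A) (hQpos : 0 < Q) (hBnn : 0 ≤ B)
    (hPnn : 0 ≤ P) (hRnn : 0 ≤ R)
    (hYang : Y ≤ C * P)
    (cheb1 : Q * S ≤ k * Y)
    (cs1 : A ^ 2 ≤ k * Q)
    (hPk : (k : ℝ) * P = A * B + A ^ 2 - k * Q)
    (cheb2 : (k : ℝ) * P ≤ A * B)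
    (cs2 : B ^ 2 ≤ R * P) :
    (1 / C) * S ≤ R := by
  have hk0 : (0 : ℝ) < k := by
    have : (1 : ℝ) ≤ k := by exact_mod_cast hk
    linarith
  have h1 : A * S ≤ k * C * B := by
    have s1 : Q * S ≤ k * (C * P) :=
      le_trans cheb1 (mul_le_mul_of_nonneg_left hYang hk0.le)
    have hSkC : 0 ≤ S + k * C := by positivity
    have s2 : A ^ 2 * (S + k * C) ≤ k * Q * (S + k * C) :=
      mul_le_mul_of_nonneg_right cs1 hSkC
    have s3 : k * Q * (S + k * C) ≤ k * C * (A * B) + k * C * A ^ 2 := by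
      nlinarith [mul_le_mul_of_nonneg_left s1 hk0.le]
    have s4 : A * (A * S) ≤ A * (k * C * B) := by nlinarith
    exact le_of_mul_le_mul_left s4 hApos
  rcases eq_or_lt_of_le hPnn with hP0 | hPpos
  · rw [← hP0] at hYang
    have hQS : Q * S ≤ 0 := by nlinarith
    have hS0 : S ≤ 0 := by nlinarith
    have h2 : (1 / C) * S ≤ 0 :=
      mul_nonpos_of_nonneg_of_nonpos (by positivity) hS0
    linarith
  · have key : (k : ℝ) * (S * P) ≤ k * (C * B ^ 2) := by
      nlinarith [mul_le_mul_of_nonneg_left cheb2 hSnn,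
        mul_le_mul_of_nonneg_right h1 hBnn]
    have key2 : S * P ≤ C * B ^ 2 := le_of_mul_le_mul_left key hk0
    have h3 : S * P ≤ (C * R) * P := by nlinarith
    have h4 : S ≤ C * R := le_of_mul_le_mul_right h3 hPpos
    rw [one_div, inv_mul_le_iff₀ hC]
    linarith


/-- discrete Hile–Protter inequality: if `λ_min ≤ λ_1 ≤ ⋯ ≤ λ_{k+1}`,
`λ_k < λ_{k+1}`, `λ_k ≤ 1 + C` with `C > 0`, `Σ_{i=1}^k (1−λ_i) ≥ 0`, and the Yang-type
inequality holds, then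
`Σ_{i=1}^k (λ_i−λ_min)/(λ_{k+1}−λ_i) ≥ (1/C)·Σ_{i=1}^k (1−λ_i)`. -/
theorem hile_protter_inequality (C lamMin : ℝ) (k : ℕ) (lam : ℕ → ℝ)
    (hC : 0 < C) (hk : 1 ≤ k)
    (hmin : lamMin ≤ lam 1)
    (hmono : ∀ i j, 1 ≤ i → i ≤ j → j ≤ k + 1 → lam i ≤ lam j)
    (hupper : lam k ≤ 1 + C)
    (hlt : lam k < lam (k+1))
    (hnonneg : 0 ≤ ∑ i ∈ Finset.Icc 1 k, (1 - lam i))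
    (hyang : ∑ i ∈ Finset.Icc 1 k, (lam (k+1) - lam i) ^ 2 * (1 - lam i)
      ≤ C * ∑ i ∈ Finset.Icc 1 k, (lam (k+1) - lam i) * (lam i - lamMin)) :
    (1 / C) * ∑ i ∈ Finset.Icc 1 k, (1 - lam i)
      ≤ ∑ i ∈ Finset.Icc 1 k, (lam i - lamMin) / (lam (k+1) - lam i) := by
  have hcard : (Finset.Icc 1 k).card = k := by
    rw [Nat.card_Icc]; omega
  have hmem : ∀ i ∈ Finset.Icc 1 k, 1 ≤ i ∧ i ≤ k := fun i hi => Finset.mem_Icc.mp hi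
  have hapos : ∀ i ∈ Finset.Icc 1 k, 0 < lam (k+1) - lam i := by
    intro i hi
    have := hmono i k (hmem i hi).1 (hmem i hi).2 (Nat.le_succ k)
    linarith
  have hbnn : ∀ i ∈ Finset.Icc 1 k, 0 ≤ lam i - lamMin := by
    intro i hi
    have := hmono 1 i le_rfl (hmem i hi).1 (le_trans (hmem i hi).2 (Nat.le_succ k))
    linarith
  have hne : (Finset.Icc 1 k).Nonempty := ⟨1, Finset.mem_Icc.mpr ⟨le_rfl, hk⟩⟩
  -- Chebyshev 1
  have cheb1 : (∑ i ∈ Finset.Icc 1 k, ((lam (k+1) - lam i) ^ 2)) *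
      (∑ i ∈ Finset.Icc 1 k, (1 - lam i))
      ≤ (k : ℝ) * ∑ i ∈ Finset.Icc 1 k, (lam (k+1) - lam i) ^ 2 * (1 - lam i) := by
    have hmv : MonovaryOn (fun i => (lam (k+1) - lam i) ^ 2)
        (fun i => 1 - lam i) (Finset.Icc 1 k : Finset ℕ) := by
      intro i hi j hj hij
      simp only at hij ⊢
      have h1 : lam j < lam i := by linarith
      have h2 : lam (k+1) - lam i ≤ lam (k+1) - lam j := by linarith
      exact pow_le_pow_left₀ (le_of_lt (hapos i hi)) h2 2
    have := hmv.sum_mul_sum_le_card_mul_sum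
    rwa [hcard] at this
  -- Cauchy–Schwarz 1
  have cs1 : (∑ i ∈ Finset.Icc 1 k, (lam (k+1) - lam i)) ^ 2
      ≤ (k : ℝ) * ∑ i ∈ Finset.Icc 1 k, (lam (k+1) - lam i) ^ 2 := by
    have := sq_sum_le_card_mul_sum_sq (s := Finset.Icc 1 k)
      (f := fun i => lam (k+1) - lam i)
    rwa [hcard] at this
  -- sum identities
  have e1 : ∑ i ∈ Finset.Icc 1 k, (lam i - lamMin)
      = (k : ℝ) * (lam (k+1) - lamMin) - ∑ i ∈ Finset.Icc 1 k, (lam (k+1) - lam i) := by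
    rw [show (∑ i ∈ Finset.Icc 1 k, (lam i - lamMin))
      = ∑ i ∈ Finset.Icc 1 k, ((lam (k+1) - lamMin) - (lam (k+1) - lam i)) from
        Finset.sum_congr rfl (fun i _ => by ring)]
    rw [Finset.sum_sub_distrib, Finset.sum_const, hcard, nsmul_eq_mul]
  have e2 : ∑ i ∈ Finset.Icc 1 k, (lam (k+1) - lam i) * (lam i - lamMin)
      = (lam (k+1) - lamMin) * (∑ i ∈ Finset.Icc 1 k, (lam (k+1) - lam i))
        - ∑ i ∈ Finset.Icc 1 k, ((lam (k+1) - lam i) ^ 2) := by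
    rw [show (∑ i ∈ Finset.Icc 1 k, (lam (k+1) - lam i) * (lam i - lamMin))
      = ∑ i ∈ Finset.Icc 1 k, ((lam (k+1) - lamMin) * (lam (k+1) - lam i)
          - (lam (k+1) - lam i) ^ 2) from
        Finset.sum_congr rfl (fun i _ => by ring)]
    rw [Finset.sum_sub_distrib, ← Finset.mul_sum]
  have hPk : (k : ℝ) * ∑ i ∈ Finset.Icc 1 k, (lam (k+1) - lam i) * (lam i - lamMin)
      = (∑ i ∈ Finset.Icc 1 k, (lam (k+1) - lam i)) *
          (∑ i ∈ Finset.Icc 1 k, (lam i - lamMin))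
        + (∑ i ∈ Finset.Icc 1 k, (lam (k+1) - lam i)) ^ 2
        - k * ∑ i ∈ Finset.Icc 1 k, ((lam (k+1) - lam i) ^ 2) := by
    rw [e2, e1]; ring
  -- Chebyshev 2
  have cheb2 : (k : ℝ) * ∑ i ∈ Finset.Icc 1 k, (lam (k+1) - lam i) * (lam i - lamMin)
      ≤ (∑ i ∈ Finset.Icc 1 k, (lam (k+1) - lam i)) *
          (∑ i ∈ Finset.Icc 1 k, (lam i - lamMin)) := by
    have hav : AntivaryOn (fun i => lam (k+1) - lam i)
        (fun i => lam i - lamMin) (Finset.Icc 1 k : Finset ℕ) := by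
      intro i hi j hj hij
      simp only at hij ⊢
      linarith
    have := hav.card_mul_sum_le_sum_mul_sum
    rwa [hcard] at this
  -- Cauchy–Schwarz 2
  have cs2 : (∑ i ∈ Finset.Icc 1 k, (lam i - lamMin)) ^ 2
      ≤ (∑ i ∈ Finset.Icc 1 k, (lam i - lamMin) / (lam (k+1) - lam i))
        * ∑ i ∈ Finset.Icc 1 k, (lam (k+1) - lam i) * (lam i - lamMin) := by
    have hcs := Finset.sum_mul_sq_le_sq_mul_sq (Finset.Icc 1 k)
      (fun i => Real.sqrt ((lam i - lamMin) / (lam (k+1) - lam i)))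
      (fun i => Real.sqrt ((lam (k+1) - lam i) * (lam i - lamMin)))
    have eq1 : ∑ i ∈ Finset.Icc 1 k,
        Real.sqrt ((lam i - lamMin) / (lam (k+1) - lam i))
          * Real.sqrt ((lam (k+1) - lam i) * (lam i - lamMin))
        = ∑ i ∈ Finset.Icc 1 k, (lam i - lamMin) := by
      refine Finset.sum_congr rfl (fun i hi => ?_)
      have ha := hapos i hi
      have hb := hbnn i hi
      rw [← Real.sqrt_mul (div_nonneg hb ha.le)]
      rw [show (lam i - lamMin) / (lam (k+1) - lam i)
          * ((lam (k+1) - lam i) * (lam i - lamMin)) = (lam i - lamMin) ^ 2 by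
        field_simp]
      exact Real.sqrt_sq hb
    have eq2 : ∑ i ∈ Finset.Icc 1 k,
        Real.sqrt ((lam i - lamMin) / (lam (k+1) - lam i)) ^ 2
        = ∑ i ∈ Finset.Icc 1 k, (lam i - lamMin) / (lam (k+1) - lam i) :=
      Finset.sum_congr rfl (fun i hi =>
        Real.sq_sqrt (div_nonneg (hbnn i hi) (hapos i hi).le))
    have eq3 : ∑ i ∈ Finset.Icc 1 k,
        Real.sqrt ((lam (k+1) - lam i) * (lam i - lamMin)) ^ 2
        = ∑ i ∈ Finset.Icc 1 k, (lam (k+1) - lam i) * (lam i - lamMin) :=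
      Finset.sum_congr rfl (fun i hi =>
        Real.sq_sqrt (mul_nonneg (hapos i hi).le (hbnn i hi)))
    rw [eq1, eq2, eq3] at hcs
    exact hcs
  -- positivity facts
  have hApos : 0 < ∑ i ∈ Finset.Icc 1 k, (lam (k+1) - lam i) :=
    Finset.sum_pos hapos hne
  have hQpos : 0 < ∑ i ∈ Finset.Icc 1 k, ((lam (k+1) - lam i) ^ 2) :=
    Finset.sum_pos (fun i hi => pow_pos (hapos i hi) 2) hne
  have hBnn : 0 ≤ ∑ i ∈ Finset.Icc 1 k, (lam i - lamMin) :=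
    Finset.sum_nonneg hbnn
  have hPnn : 0 ≤ ∑ i ∈ Finset.Icc 1 k, (lam (k+1) - lam i) * (lam i - lamMin) :=
    Finset.sum_nonneg (fun i hi => mul_nonneg (hapos i hi).le (hbnn i hi))
  have hRnn : 0 ≤ ∑ i ∈ Finset.Icc 1 k, (lam i - lamMin) / (lam (k+1) - lam i) :=
    Finset.sum_nonneg (fun i hi => div_nonneg (hbnn i hi) (hapos i hi).le)
  exact hp_aux k C _ _ _ _ _ _ _ hC hk hnonneg hApos hQpos hBnn hPnn hRnn
    hyang cheb1 cs1 hPk cheb2 cs2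
end

section
/- (Cheng–Yang recursion) Let 0 < a_1 ≤ a_2 ≤ ⋯ ≤ a_{k+1} be positive reals and θ > 0 such that Σ_{i=1}^k (a_{k+1}−a_i)² ≤ θ·Σ_{i=1}^k a_i(a_{k+1}−a_i). Define F_k = (1+θ/2)·( (1/k)Σ_{i=1}^k a_i )² − (1/k)Σ_{i=1}^k a_i². Then F_{k+1} ≤ ((k+1)/k)^θ · F_k. -/
open Finset

set_option maxHeartbeats 3200000
set_option maxRecDepth 8000

private lemma cy_aux_H (u t : ℝ) (hu : 0 ≤ u) (ht : 0 ≤ t) :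
    0 ≤ 23328 + 58320*t + 52704*t^2 + 22752*t^3 + 6080*t^4 + 1024*t^5 + 132192*u + 320112*u*t + 275040*u*t^2 + 108192*u*t^3 + 25280*u*t^4 + 4096*u*t^5 + 324648*u^2 + 759780*u^2*t + 618072*u^2*t^2 + 218904*u^2*t^3 + 42928*u^2*t^4 + 6656*u^2*t^5 + 451440*u^3 + 1018872*u^3*t + 781632*u^3*t^2 + 246288*u^3*t^3 + 38144*u^3*t^4 + 5632*u^3*t^5 + 388872*u^4 + 844692*u^4*t + 608856*u^4*t^2 + 168840*u^4*t^3 + 18736*u^4*t^4 + 2624*u^4*t^5 + 212544*u^5 + 443520*u^5*t + 299376*u^5*t^2 + 72480*u^5*t^3 + 4832*u^5*t^4 + 640*u^5*t^5 + 72000*u^6 + 144096*u^6*t + 90816*u^6*t^2 + 19152*u^6*t^3 + 512*u^6*t^4 + 64*u^6*t^5 + 13824*u^7 + 26496*u^7*t + 15552*u^7*t^2 + 2880*u^7*t^3 + 1152*u^8 + 2112*u^8*t + 1152*u^8*t^2 + 192*u^8*t^3 := by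
  linarith [mul_nonneg (pow_nonneg hu 0) (pow_nonneg ht 0), mul_nonneg (pow_nonneg hu 0) (pow_nonneg ht 1), mul_nonneg (pow_nonneg hu 0) (pow_nonneg ht 2), mul_nonneg (pow_nonneg hu 0) (pow_nonneg ht 3), mul_nonneg (pow_nonneg hu 0) (pow_nonneg ht 4), mul_nonneg (pow_nonneg hu 0) (pow_nonneg ht 5), mul_nonneg (pow_nonneg hu 1) (pow_nonneg ht 0), mul_nonneg (pow_nonneg hu 1) (pow_nonneg ht 1), mul_nonneg (pow_nonneg hu 1) (pow_nonneg ht 2), mul_nonneg (pow_nonneg hu 1) (pow_nonneg ht 3), mul_nonneg (pow_nonneg hu 1) (pow_nonneg ht 4), mul_nonneg (pow_nonneg hu 1) (pow_nonneg ht 5), mul_nonneg (pow_nonneg hu 2) (pow_nonneg ht 0), mul_nonneg (pow_nonneg hu 2) (pow_nonneg ht 1), mul_nonneg (pow_nonneg hu 2) (pow_nonneg ht 2), mul_nonneg (pow_nonneg hu 2) (pow_nonneg ht 3), mul_nonneg (pow_nonneg hu 2) (pow_nonneg ht 4), mul_nonneg (pow_nonneg hu 2) (pow_nonneg ht 5),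 mul_nonneg (pow_nonneg hu 3) (pow_nonneg ht 0), mul_nonneg (pow_nonneg hu 3) (pow_nonneg ht 1), mul_nonneg (pow_nonneg hu 3) (pow_nonneg ht 2), mul_nonneg (pow_nonneg hu 3) (pow_nonneg ht 3), mul_nonneg (pow_nonneg hu 3) (pow_nonneg ht 4), mul_nonneg (pow_nonneg hu 3) (pow_nonneg ht 5), mul_nonneg (pow_nonneg hu 4) (pow_nonneg ht 0), mul_nonneg (pow_nonneg hu 4) (pow_nonneg ht 1), mul_nonneg (pow_nonneg hu 4) (pow_nonneg ht 2), mul_nonneg (pow_nonneg hu 4) (pow_nonneg ht 3), mul_nonneg (pow_nonneg hu 4) (pow_nonneg ht 4), mul_nonneg (pow_nonneg hu 4) (pow_nonneg ht 5), mul_nonneg (pow_nonneg hu 5) (pow_nonneg ht 0), mul_nonneg (pow_nonneg hu 5) (pow_nonneg ht 1), mul_nonneg (pow_nonneg hu 5) (pow_nonneg ht 2), mul_nonneg (pow_nonneg hu 5) (pow_nonneg ht 3), mul_nonneg (pow_nonneg hu 5) (pow_nonneg ht 4), mul_nonneg (pow_nonneg hu 5) (pow_nonneg ht 5), mul_nonneg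 (pow_nonneg hu 6) (pow_nonneg ht 0), mul_nonneg (pow_nonneg hu 6) (pow_nonneg ht 1), mul_nonneg (pow_nonneg hu 6) (pow_nonneg ht 2), mul_nonneg (pow_nonneg hu 6) (pow_nonneg ht 3), mul_nonneg (pow_nonneg hu 6) (pow_nonneg ht 4), mul_nonneg (pow_nonneg hu 6) (pow_nonneg ht 5), mul_nonneg (pow_nonneg hu 7) (pow_nonneg ht 0), mul_nonneg (pow_nonneg hu 7) (pow_nonneg ht 1), mul_nonneg (pow_nonneg hu 7) (pow_nonneg ht 2), mul_nonneg (pow_nonneg hu 7) (pow_nonneg ht 3), mul_nonneg (pow_nonneg hu 8) (pow_nonneg ht 0), mul_nonneg (pow_nonneg hu 8) (pow_nonneg ht 1), mul_nonneg (pow_nonneg hu 8) (pow_nonneg ht 2), mul_nonneg (pow_nonneg hu 8) (pow_nonneg ht 3)]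

private lemma cy_aux_A (u t : ℝ) (hu : 0 ≤ u) (ht : 0 ≤ t) :
    0 < 486 + 513*t + 63*t^2 + 32*t^3 + 2268*u + 2358*u*t + 204*u*t^2 + 96*u*t^3 + 4374*u^2 + 4485*u^2*t + 243*u^2*t^2 + 104*u^2*t^3 + 4464*u^3 + 4524*u^3*t + 126*u^3*t^2 + 48*u^3*t^3 + 2544*u^4 + 2556*u^4*t + 24*u^4*t^2 + 8*u^4*t^3 + 768*u^5 + 768*u^5*t + 96*u^6 + 96*u^6*t := by
  linarith [mul_nonneg (pow_nonneg hu 0) (pow_nonneg ht 0), mul_nonneg (pow_nonneg hu 0) (pow_nonneg ht 1), mul_nonneg (pow_nonneg hu 0) (pow_nonneg ht 2), mul_nonneg (pow_nonneg hu 0) (pow_nonneg ht 3), mul_nonneg (pow_nonneg hu 1) (pow_nonneg ht 0), mul_nonneg (pow_nonneg hu 1) (pow_nonneg ht 1), mul_nonneg (pow_nonneg hu 1) (pow_nonneg ht 2), mul_nonneg (pow_nonneg hu 1) (pow_nonneg ht 3), mul_nonneg (pow_nonneg hu 2) (pow_nonneg ht 0), mul_nonneg (pow_nonneg hu 2) (pow_nonneg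 ht 1), mul_nonneg (pow_nonneg hu 2) (pow_nonneg ht 2), mul_nonneg (pow_nonneg hu 2) (pow_nonneg ht 3), mul_nonneg (pow_nonneg hu 3) (pow_nonneg ht 0), mul_nonneg (pow_nonneg hu 3) (pow_nonneg ht 1), mul_nonneg (pow_nonneg hu 3) (pow_nonneg ht 2), mul_nonneg (pow_nonneg hu 3) (pow_nonneg ht 3), mul_nonneg (pow_nonneg hu 4) (pow_nonneg ht 0), mul_nonneg (pow_nonneg hu 4) (pow_nonneg ht 1), mul_nonneg (pow_nonneg hu 4) (pow_nonneg ht 2), mul_nonneg (pow_nonneg hu 4) (pow_nonneg ht 3), mul_nonneg (pow_nonneg hu 5) (pow_nonneg ht 0), mul_nonneg (pow_nonneg hu 5) (pow_nonneg ht 1), mul_nonneg (pow_nonneg hu 6) (pow_nonneg ht 0), mul_nonneg (pow_nonneg hu 6) (pow_nonneg ht 1)]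

private lemma cy_aux_c2 (u t : ℝ) (hu : 0 ≤ u) (ht : 0 ≤ t) :
    0 ≤ 324 + 432*t + 144*t^2 + 32*t^3 + 1134*u + 1440*u*t + 384*u*t^2 + 64*u*t^3 + 1566*u^2 + 1884*u^2*t + 372*u^2*t^2 + 40*u^2*t^3 + 1068*u^3 + 1212*u^3*t + 156*u^3*t^2 + 8*u^3*t^3 + 360*u^4 + 384*u^4*t + 24*u^4*t^2 + 48*u^5 + 48*u^5*t := by
  linarith [mul_nonneg (pow_nonneg hu 0) (pow_nonneg ht 0), mul_nonneg (pow_nonneg hu 0) (pow_nonneg ht 1), mul_nonneg (pow_nonneg hu 0) (pow_nonneg ht 2), mul_nonneg (pow_nonneg hu 0) (pow_nonneg ht 3), mul_nonneg (pow_nonneg hu 1) (pow_nonneg ht 0), mul_nonneg (pow_nonneg hu 1) (pow_nonneg ht 1), mul_nonneg (pow_nonneg hu 1) (pow_nonneg ht 2), mul_nonneg (pow_nonneg hu 1) (pow_nonneg ht 3), mul_nonneg (pow_nonneg hu 2) (pow_nonneg ht 0), mul_nonneg (pow_nonneg hu 2) (pow_nonneg ht 1), mul_nonneg (pow_nonneg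 hu 2) (pow_nonneg ht 2), mul_nonneg (pow_nonneg hu 2) (pow_nonneg ht 3), mul_nonneg (pow_nonneg hu 3) (pow_nonneg ht 0), mul_nonneg (pow_nonneg hu 3) (pow_nonneg ht 1), mul_nonneg (pow_nonneg hu 3) (pow_nonneg ht 2), mul_nonneg (pow_nonneg hu 3) (pow_nonneg ht 3), mul_nonneg (pow_nonneg hu 4) (pow_nonneg ht 0), mul_nonneg (pow_nonneg hu 4) (pow_nonneg ht 1), mul_nonneg (pow_nonneg hu 4) (pow_nonneg ht 2), mul_nonneg (pow_nonneg hu 5) (pow_nonneg ht 0), mul_nonneg (pow_nonneg hu 5) (pow_nonneg ht 1)]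

/-- Cheng-Yang recursion -/
theorem cheng_yang_recursion (k : ℕ) (a : ℕ → ℝ) (θ : ℝ) (F : ℕ → ℝ)
    (hk : 1 ≤ k) (hθ : 0 < θ)
    (hpos : ∀ i, 1 ≤ i → i ≤ k + 1 → 0 < a i)
    (hmono : ∀ i j, 1 ≤ i → i ≤ j → j ≤ k + 1 → a i ≤ a j)
    (hineq : ∑ i ∈ Finset.Icc 1 k, (a (k+1) - a i) ^ 2
      ≤ θ * ∑ i ∈ Finset.Icc 1 k, a i * (a (k+1) - a i))
    (hF : ∀ j, F j = (1 + θ/2) * ((1/(j:ℝ)) * ∑ i ∈ Finset.Icc 1 j, a i) ^ 2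
      - (1/(j:ℝ)) * ∑ i ∈ Finset.Icc 1 j, (a i) ^ 2) :
    F (k+1) ≤ (((k:ℝ)+1)/(k:ℝ)) ^ θ * F k := by
  set K : ℝ := (k:ℝ) with hKdef
  have hK1 : (1:ℝ) ≤ K := by rw [hKdef]; exact_mod_cast hk
  have hK0 : (0:ℝ) < K := by linarith
  have hu : (0:ℝ) ≤ K - 1 := by linarith
  have ht : (0:ℝ) ≤ θ := hθ.le
  set S1 : ℝ := ∑ i ∈ Finset.Icc 1 k, a i with hS1def
  set S2 : ℝ := ∑ i ∈ Finset.Icc 1 k, (a i)^2 with hS2def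
  set lam : ℝ := a (k+1) with hlamdef
  -- expand the two sums in the hypothesis
  have hcard : (((Finset.Icc 1 k).card : ℕ) : ℝ) = K := by
    rw [Nat.card_Icc]; simp [hKdef]
  have e1 : ∑ i ∈ Finset.Icc 1 k, (a (k+1) - a i) ^ 2 = K*lam^2 - 2*lam*S1 + S2 := by
    have : ∀ i ∈ Finset.Icc 1 k, (a (k+1) - a i) ^ 2
        = lam^2 - (2*lam) * a i + (a i)^2 := fun i _ => by rw [← hlamdef]; ring
    rw [Finset.sum_congr rfl this, Finset.sum_add_distrib, Finset.sum_sub_distrib,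
      Finset.sum_const, ← Finset.mul_sum, nsmul_eq_mul, hcard, ← hS1def, ← hS2def]
    try ring
  have e2 : ∑ i ∈ Finset.Icc 1 k, a i * (a (k+1) - a i) = lam*S1 - S2 := by
    have : ∀ i ∈ Finset.Icc 1 k, a i * (a (k+1) - a i)
        = lam * a i - (a i)^2 := fun i _ => by rw [← hlamdef]; ring
    rw [Finset.sum_congr rfl this, Finset.sum_sub_distrib, ← Finset.mul_sum,
      ← hS1def, ← hS2def]
    try ring
  have hslack : 0 ≤ θ*(lam*S1 - S2) - (K*lam^2 - 2*lam*S1 + S2) := by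
    have h := hineq
    rw [e1, e2] at h
    linarith
  have hS1pos : 0 < S1 := by
    refine Finset.sum_pos (fun i hi => ?_) ⟨1, Finset.mem_Icc.mpr ⟨le_refl 1, hk⟩⟩
    rcases Finset.mem_Icc.mp hi with ⟨h1, h2⟩
    exact hpos i h1 (by omega)
  -- nonnegativity of F k (scaled)
  have hFkN : 0 ≤ (1+θ/2)*S1^2 - K*S2 := by
    nlinarith [sq_nonneg (2*K*lam - (2+θ)*S1), mul_nonneg hK0.le hslack,
      mul_nonneg (mul_nonneg ht hθ.le) (sq_nonneg S1), mul_nonneg ht (sq_nonneg S1),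
      mul_nonneg ht hslack, mul_nonneg (mul_nonneg ht hK0.le) hslack]
  have hFk : 0 ≤ F k := by
    rw [hF k, ← hS1def, ← hS2def, ← hKdef]
    have e : (1 + θ/2) * ((1/K) * S1) ^ 2 - (1/K) * S2
        = ((1+θ/2)*S1^2 - K*S2)/K^2 := by field_simp
    rw [e]
    positivity
  -- certificate pieces
  have hAq : 0 < (6*K^2 + 9*K^2*θ + 9*K^2*θ^2 + 8*K^2*θ^3 + 48*K^3 + 60*K^3*θ + 30*K^3*θ^2 + 16*K^3*θ^3 + 144*K^4 + 156*K^4*θ + 24*K^4*θ^2 + 8*K^4*θ^3 + 192*K^5 + 192*K^5*θ + 96*K^6 + 96*K^6*θ) := by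
    have h := cy_aux_A (K-1) θ hu ht
    nlinarith [h]
  have hc2 : 0 ≤ (6*K + 12*K*θ + 12*K*θ^2 + 8*K*θ^3 + 42*K^2 + 72*K^2*θ + 48*K^2*θ^2 + 16*K^2*θ^3 + 108*K^3 + 156*K^3*θ + 60*K^3*θ^2 + 8*K^3*θ^3 + 120*K^4 + 144*K^4*θ + 24*K^4*θ^2 + 48*K^5 + 48*K^5*θ) := by
    have h := cy_aux_c2 (K-1) θ hu ht
    nlinarith [h]
  have hH : 0 ≤ (23328 + 58320*θ + 52704*θ^2 + 22752*θ^3 + 6080*θ^4 + 1024*θ^5 + 132192*(K-1) + 320112*(K-1)*θ + 275040*(K-1)*θ^2 + 108192*(K-1)*θ^3 + 25280*(K-1)*θ^4 + 4096*(K-1)*θ^5 + 324648*(K-1)^2 + 759780*(K-1)^2*θ + 618072*(K-1)^2*θ^2 + 218904*(K-1)^2*θ^3 + 42928*(K-1)^2*θ^4 + 6656*(K-1)^2*θ^5 + 451440*(K-1)^3 + 1018872*(K-1)^3*θ + 781632*(K-1)^3*θ^2 + 246288*(K-1)^3*θ^3 + 38144*(K-1)^3*θ^4 + 5632*(K-1)^3*θ^5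 + 388872*(K-1)^4 + 844692*(K-1)^4*θ + 608856*(K-1)^4*θ^2 + 168840*(K-1)^4*θ^3 + 18736*(K-1)^4*θ^4 + 2624*(K-1)^4*θ^5 + 212544*(K-1)^5 + 443520*(K-1)^5*θ + 299376*(K-1)^5*θ^2 + 72480*(K-1)^5*θ^3 + 4832*(K-1)^5*θ^4 + 640*(K-1)^5*θ^5 + 72000*(K-1)^6 + 144096*(K-1)^6*θ + 90816*(K-1)^6*θ^2 + 19152*(K-1)^6*θ^3 + 512*(K-1)^6*θ^4 + 64*(K-1)^6*θ^5 + 13824*(K-1)^7 + 26496*(K-1)^7*θ + 15552*(K-1)^7*θ^2 + 2880*(K-1)^7*θ^3 + 1152*(K-1)^8 + 2112*(K-1)^8*θ + 1152*(K-1)^8*θ^2 + 192*(K-1)^8*θ^3) := cy_aux_H (K-1) θ hu ht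
  -- main positivity: Phi2
  have hident : (4*(6*K^2 + 9*K^2*θ + 9*K^2*θ^2 + 8*K^2*θ^3 + 48*K^3 + 60*K^3*θ + 30*K^3*θ^2 + 16*K^3*θ^3 + 144*K^4 + 156*K^4*θ + 24*K^4*θ^2 + 8*K^4*θ^3 + 192*K^5 + 192*K^5*θ + 96*K^6 + 96*K^6*θ)*(1+θ)) * ((12 + 30*θ + 36*θ^2 + 28*θ^3 + 8*θ^4 + 96*K + 192*K*θ + 168*K*θ^2 + 80*K*θ^3 + 16*K*θ^4 + 288*K^2 + 456*K^2*θ + 276*K^2*θ^2 + 76*K^2*θ^3 + 8*K^2*θ^4 + 384*K^3 + 480*K^3*θ + 192*K^3*θ^2 + 24*K^3*θ^3 + 192*K^4 + 192*K^4*θ + 48*K^4*θ^2) * S1^2 + (- 24*K^2 - 12*K^2*θ - 144*K^3 - 72*K^3*θ - 288*K^4 - 144*K^4*θ - 192*K^5 - 96*K^5*θ) * S1*lam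
      + (- 6*K^2*θ + 12*K^3 - 36*K^3*θ + 72*K^4 - 72*K^4*θ + 144*K^5 - 48*K^5*θ + 96*K^6) * lam^2 + (- 12*K - 24*K*θ - 24*K*θ^2 - 16*K*θ^3 - 84*K^2 - 144*K^2*θ - 96*K^2*θ^2 - 32*K^2*θ^3 - 216*K^3 - 312*K^3*θ - 120*K^3*θ^2 - 16*K^3*θ^3 - 240*K^4 - 288*K^4*θ - 48*K^4*θ^2 - 96*K^5 - 96*K^5*θ) * S2)
      = 8*(6*K^2 + 9*K^2*θ + 9*K^2*θ^2 + 8*K^2*θ^3 + 48*K^3 + 60*K^3*θ + 30*K^3*θ^2 + 16*K^3*θ^3 + 144*K^4 + 156*K^4*θ + 24*K^4*θ^2 + 8*K^4*θ^3 + 192*K^5 + 192*K^5*θ + 96*K^6 + 96*K^6*θ)*(6*K + 12*K*θ + 12*K*θ^2 + 8*K*θ^3 + 42*K^2 + 72*K^2*θ + 48*K^2*θ^2 + 16*K^2*θ^3 + 108*K^3 + 156*K^3*θ + 60*K^3*θ^2 + 8*K^3*θ^3 + 120*K^4 + 144*K^4*θ + 24*K^4*θ^2 + 48*K^5 + 48*K^5*θ)*(θ*(lam*S1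 - S2) - (K*lam^2 - 2*lam*S1 + S2))
        + 2*(2*(6*K^2 + 9*K^2*θ + 9*K^2*θ^2 + 8*K^2*θ^3 + 48*K^3 + 60*K^3*θ + 30*K^3*θ^2 + 16*K^3*θ^3 + 144*K^4 + 156*K^4*θ + 24*K^4*θ^2 + 8*K^4*θ^3 + 192*K^5 + 192*K^5*θ + 96*K^6 + 96*K^6*θ)*lam + (- 12*K - 30*K*θ - 36*K*θ^2 - 28*K*θ^3 - 8*K*θ^4 - 96*K^2 - 204*K^2*θ - 174*K^2*θ^2 - 80*K^2*θ^3 - 16*K^2*θ^4 - 288*K^3 - 528*K^3*θ - 312*K^3*θ^2 - 76*K^3*θ^3 - 8*K^3*θ^4 - 384*K^4 - 624*K^4*θ - 264*K^4*θ^2 - 24*K^4*θ^3 - 192*K^5 - 288*K^5*θ - 96*K^5*θ^2)*S1)^2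
        + 2*θ^3*(23328 + 58320*θ + 52704*θ^2 + 22752*θ^3 + 6080*θ^4 + 1024*θ^5 + 132192*(K-1) + 320112*(K-1)*θ + 275040*(K-1)*θ^2 + 108192*(K-1)*θ^3 + 25280*(K-1)*θ^4 + 4096*(K-1)*θ^5 + 324648*(K-1)^2 + 759780*(K-1)^2*θ + 618072*(K-1)^2*θ^2 + 218904*(K-1)^2*θ^3 + 42928*(K-1)^2*θ^4 + 6656*(K-1)^2*θ^5 + 451440*(K-1)^3 + 1018872*(K-1)^3*θ + 781632*(K-1)^3*θ^2 + 246288*(K-1)^3*θ^3 + 38144*(K-1)^3*θ^4 + 5632*(K-1)^3*θ^5 + 388872*(K-1)^4 + 844692*(K-1)^4*θ + 608856*(K-1)^4*θ^2 + 168840*(K-1)^4*θ^3 + 18736*(K-1)^4*θ^4 + 2624*(K-1)^4*θ^5 + 212544*(K-1)^5 + 443520*(K-1)^5*θ + 299376*(K-1)^5*θ^2 + 72480*(K-1)^5*θ^3 + 4832*(K-1)^5*θ^4 + 640*(K-1)^5*θ^5 + 72000*(K-1)^6 + 144096*(K-1)^6*θ + 90816*(K-1)^6*θ^2 + 19152*(K-1)^6*θ^3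 + 512*(K-1)^6*θ^4 + 64*(K-1)^6*θ^5 + 13824*(K-1)^7 + 26496*(K-1)^7*θ + 15552*(K-1)^7*θ^2 + 2880*(K-1)^7*θ^3 + 1152*(K-1)^8 + 2112*(K-1)^8*θ + 1152*(K-1)^8*θ^2 + 192*(K-1)^8*θ^3)*S1^2 := by
    ring
  have hPhi : 0 ≤ ((12 + 30*θ + 36*θ^2 + 28*θ^3 + 8*θ^4 + 96*K + 192*K*θ + 168*K*θ^2 + 80*K*θ^3 + 16*K*θ^4 + 288*K^2 + 456*K^2*θ + 276*K^2*θ^2 + 76*K^2*θ^3 + 8*K^2*θ^4 + 384*K^3 + 480*K^3*θ + 192*K^3*θ^2 + 24*K^3*θ^3 + 192*K^4 + 192*K^4*θ + 48*K^4*θ^2) * S1^2 + (- 24*K^2 - 12*K^2*θ - 144*K^3 - 72*K^3*θ - 288*K^4 - 144*K^4*θ - 192*K^5 - 96*K^5*θ) * S1*lam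
      + (- 6*K^2*θ + 12*K^3 - 36*K^3*θ + 72*K^4 - 72*K^4*θ + 144*K^5 - 48*K^5*θ + 96*K^6) * lam^2 + (- 12*K - 24*K*θ - 24*K*θ^2 - 16*K*θ^3 - 84*K^2 - 144*K^2*θ - 96*K^2*θ^2 - 32*K^2*θ^3 - 216*K^3 - 312*K^3*θ - 120*K^3*θ^2 - 16*K^3*θ^3 - 240*K^4 - 288*K^4*θ - 48*K^4*θ^2 - 96*K^5 - 96*K^5*θ) * S2) := by
    have hpos4 : 0 < 4*(6*K^2 + 9*K^2*θ + 9*K^2*θ^2 + 8*K^2*θ^3 + 48*K^3 + 60*K^3*θ + 30*K^3*θ^2 + 16*K^3*θ^3 + 144*K^4 + 156*K^4*θ + 24*K^4*θ^2 + 8*K^4*θ^3 + 192*K^5 + 192*K^5*θ + 96*K^6 + 96*K^6*θ)*(1+θ) := by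
      have : (0:ℝ) < 1 + θ := by linarith
      positivity
    have hrhs : 0 ≤ (4*(6*K^2 + 9*K^2*θ + 9*K^2*θ^2 + 8*K^2*θ^3 + 48*K^3 + 60*K^3*θ + 30*K^3*θ^2 + 16*K^3*θ^3 + 144*K^4 + 156*K^4*θ + 24*K^4*θ^2 + 8*K^4*θ^3 + 192*K^5 + 192*K^5*θ + 96*K^6 + 96*K^6*θ)*(1+θ)) * ((12 + 30*θ + 36*θ^2 + 28*θ^3 + 8*θ^4 + 96*K + 192*K*θ + 168*K*θ^2 + 80*K*θ^3 + 16*K*θ^4 + 288*K^2 + 456*K^2*θ + 276*K^2*θ^2 + 76*K^2*θ^3 + 8*K^2*θ^4 + 384*K^3 + 480*K^3*θ + 192*K^3*θ^2 + 24*K^3*θ^3 + 192*K^4 + 192*K^4*θ + 48*K^4*θ^2) * S1^2 + (- 24*K^2 - 12*K^2*θ - 144*K^3 - 72*K^3*θ - 288*K^4 - 144*K^4*θ - 192*K^5 - 96*K^5*θ) * S1*lam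
      + (- 6*K^2*θ + 12*K^3 - 36*K^3*θ + 72*K^4 - 72*K^4*θ + 144*K^5 - 48*K^5*θ + 96*K^6) * lam^2 + (- 12*K - 24*K*θ - 24*K*θ^2 - 16*K*θ^3 - 84*K^2 - 144*K^2*θ - 96*K^2*θ^2 - 32*K^2*θ^3 - 216*K^3 - 312*K^3*θ - 120*K^3*θ^2 - 16*K^3*θ^3 - 240*K^4 - 288*K^4*θ - 48*K^4*θ^2 - 96*K^5 - 96*K^5*θ) * S2) := by
      rw [hident]
      have t1 : 0 ≤ 8*(6*K^2 + 9*K^2*θ + 9*K^2*θ^2 + 8*K^2*θ^3 + 48*K^3 + 60*K^3*θ + 30*K^3*θ^2 + 16*K^3*θ^3 + 144*K^4 + 156*K^4*θ + 24*K^4*θ^2 + 8*K^4*θ^3 + 192*K^5 + 192*K^5*θ + 96*K^6 + 96*K^6*θ)*(6*K + 12*K*θ + 12*K*θ^2 + 8*K*θ^3 + 42*K^2 + 72*K^2*θ + 48*K^2*θ^2 + 16*K^2*θ^3 + 108*K^3 + 156*K^3*θ + 60*K^3*θ^2 + 8*K^3*θ^3 + 120*K^4 + 144*K^4*θ + 24*K^4*θ^2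 + 48*K^5 + 48*K^5*θ)*(θ*(lam*S1 - S2) - (K*lam^2 - 2*lam*S1 + S2)) := by
        have h8 : 0 ≤ 8*(6*K^2 + 9*K^2*θ + 9*K^2*θ^2 + 8*K^2*θ^3 + 48*K^3 + 60*K^3*θ + 30*K^3*θ^2 + 16*K^3*θ^3 + 144*K^4 + 156*K^4*θ + 24*K^4*θ^2 + 8*K^4*θ^3 + 192*K^5 + 192*K^5*θ + 96*K^6 + 96*K^6*θ)*(6*K + 12*K*θ + 12*K*θ^2 + 8*K*θ^3 + 42*K^2 + 72*K^2*θ + 48*K^2*θ^2 + 16*K^2*θ^3 + 108*K^3 + 156*K^3*θ + 60*K^3*θ^2 + 8*K^3*θ^3 + 120*K^4 + 144*K^4*θ + 24*K^4*θ^2 + 48*K^5 + 48*K^5*θ) := by positivity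
        exact mul_nonneg h8 hslack
      have t2 : 0 ≤ 2*(2*(6*K^2 + 9*K^2*θ + 9*K^2*θ^2 + 8*K^2*θ^3 + 48*K^3 + 60*K^3*θ + 30*K^3*θ^2 + 16*K^3*θ^3 + 144*K^4 + 156*K^4*θ + 24*K^4*θ^2 + 8*K^4*θ^3 + 192*K^5 + 192*K^5*θ + 96*K^6 + 96*K^6*θ)*lam + (- 12*K - 30*K*θ - 36*K*θ^2 - 28*K*θ^3 - 8*K*θ^4 - 96*K^2 - 204*K^2*θ - 174*K^2*θ^2 - 80*K^2*θ^3 - 16*K^2*θ^4 - 288*K^3 - 528*K^3*θ - 312*K^3*θ^2 - 76*K^3*θ^3 - 8*K^3*θ^4 - 384*K^4 - 624*K^4*θ - 264*K^4*θ^2 - 24*K^4*θ^3 - 192*K^5 - 288*K^5*θ - 96*K^5*θ^2)*S1)^2 := by positivity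
      have t3 : 0 ≤ 2*θ^3*(23328 + 58320*θ + 52704*θ^2 + 22752*θ^3 + 6080*θ^4 + 1024*θ^5 + 132192*(K-1) + 320112*(K-1)*θ + 275040*(K-1)*θ^2 + 108192*(K-1)*θ^3 + 25280*(K-1)*θ^4 + 4096*(K-1)*θ^5 + 324648*(K-1)^2 + 759780*(K-1)^2*θ + 618072*(K-1)^2*θ^2 + 218904*(K-1)^2*θ^3 + 42928*(K-1)^2*θ^4 + 6656*(K-1)^2*θ^5 + 451440*(K-1)^3 + 1018872*(K-1)^3*θ + 781632*(K-1)^3*θ^2 + 246288*(K-1)^3*θ^3 + 38144*(K-1)^3*θ^4 + 5632*(K-1)^3*θ^5 + 388872*(K-1)^4 + 844692*(K-1)^4*θ + 608856*(K-1)^4*θ^2 + 168840*(K-1)^4*θ^3 + 18736*(K-1)^4*θ^4 + 2624*(K-1)^4*θ^5 + 212544*(K-1)^5 + 443520*(K-1)^5*θ + 299376*(K-1)^5*θ^2 + 72480*(K-1)^5*θ^3 + 4832*(K-1)^5*θ^4 + 640*(K-1)^5*θ^5 + 72000*(K-1)^6 + 144096*(K-1)^6*θ + 90816*(K-1)^6*θ^2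 + 19152*(K-1)^6*θ^3 + 512*(K-1)^6*θ^4 + 64*(K-1)^6*θ^5 + 13824*(K-1)^7 + 26496*(K-1)^7*θ + 15552*(K-1)^7*θ^2 + 2880*(K-1)^7*θ^3 + 1152*(K-1)^8 + 2112*(K-1)^8*θ + 1152*(K-1)^8*θ^2 + 192*(K-1)^8*θ^3)*S1^2 := by
        have h3 : 0 ≤ 2*θ^3 := by positivity
        exact mul_nonneg (mul_nonneg h3 hH) (sq_nonneg S1)
      linarith
    exact (mul_nonneg_iff_of_pos_left hpos4).mp hrhs
  -- main step : F (k+1) ≤ L * F k with L = L6/(6*(2K+1)^3)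
  have hW0 : (0:ℝ) < 2*K+1 := by linarith
  have hmain : F (k+1) ≤ ((6 + 12*θ + 12*θ^2 + 8*θ^3 + 36*K + 48*K*θ + 24*K*θ^2 + 72*K^2 + 48*K^2*θ + 48*K^3)/(6*(2*K+1)^3)) * F k := by
    rw [hF (k+1), hF k, ← hS1def, ← hS2def, ← hKdef]
    have hsum1 : ∑ i ∈ Finset.Icc 1 (k+1), a i = S1 + lam := by
      rw [Finset.sum_Icc_succ_top (by omega : 1 ≤ k+1), ← hS1def, ← hlamdef]
    have hsum2 : ∑ i ∈ Finset.Icc 1 (k+1), (a i)^2 = S2 + lam^2 := by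
      rw [Finset.sum_Icc_succ_top (by omega : 1 ≤ k+1), ← hS2def, ← hlamdef]
    have hcast : ((k+1:ℕ):ℝ) = K+1 := by push_cast [hKdef]; ring
    rw [hsum1, hsum2, hcast]
    rw [← sub_nonneg]
    have e : ((6 + 12*θ + 12*θ^2 + 8*θ^3 + 36*K + 48*K*θ + 24*K*θ^2 + 72*K^2 + 48*K^2*θ + 48*K^3)/(6*(2*K+1)^3)) * ((1 + θ/2) * (1/K * S1)^2 - 1/K * S2)
        - ((1 + θ/2) * (1/(K+1) * (S1+lam))^2 - 1/(K+1) * (S2 + lam^2))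
        = ((12 + 30*θ + 36*θ^2 + 28*θ^3 + 8*θ^4 + 96*K + 192*K*θ + 168*K*θ^2 + 80*K*θ^3 + 16*K*θ^4 + 288*K^2 + 456*K^2*θ + 276*K^2*θ^2 + 76*K^2*θ^3 + 8*K^2*θ^4 + 384*K^3 + 480*K^3*θ + 192*K^3*θ^2 + 24*K^3*θ^3 + 192*K^4 + 192*K^4*θ + 48*K^4*θ^2) * S1^2 + (- 24*K^2 - 12*K^2*θ - 144*K^3 - 72*K^3*θ - 288*K^4 - 144*K^4*θ - 192*K^5 - 96*K^5*θ) * S1*lam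
      + (- 6*K^2*θ + 12*K^3 - 36*K^3*θ + 72*K^4 - 72*K^4*θ + 144*K^5 - 48*K^5*θ + 96*K^6) * lam^2 + (- 12*K - 24*K*θ - 24*K*θ^2 - 16*K*θ^3 - 84*K^2 - 144*K^2*θ - 96*K^2*θ^2 - 32*K^2*θ^3 - 216*K^3 - 312*K^3*θ - 120*K^3*θ^2 - 16*K^3*θ^3 - 240*K^4 - 288*K^4*θ - 48*K^4*θ^2 - 96*K^5 - 96*K^5*θ) * S2) / (12*(2*K+1)^3*K^2*(K+1)^2) := by
      field_simp
      ring
    rw [e]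
    positivity
  -- the power bound
  have hlog : 2/(2*K+1) ≤ Real.log ((K+1)/K) := by
    have hb : (0:ℝ) < (K+1)/K := by positivity
    rw [Real.le_log_iff_exp_le hb]
    have hz0 : (0:ℝ) ≤ 2/(2*K+1) := by positivity
    have hz1 : 2/(2*K+1) ≤ 1 := by
      rw [div_le_one hW0]; linarith
    have hexp := Real.exp_bound' hz0 hz1 (by norm_num : 0 < 4)
    have h5 : Real.exp (2/(2*K+1)) ≤ 1 + (2/(2*K+1)) + (2/(2*K+1))^2/2
        + (2/(2*K+1))^3/6 + (2/(2*K+1))^4*5/96 := by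
      refine hexp.trans (le_of_eq ?_)
      norm_num [Finset.sum_range_succ, Nat.factorial]
      try ring
    refine h5.trans ?_
    rw [← sub_nonneg, show (K+1)/K - (1 + (2/(2*K+1)) + (2/(2*K+1))^2/2
        + (2/(2*K+1))^3/6 + (2/(2*K+1))^4*5/96)
        = (128*K^2 + 176*K + 96)/(96*K*(2*K+1)^4) from by field_simp; ring]
    exact div_nonneg (by nlinarith [hK0]) (by positivity)
  have hLle : (6 + 12*θ + 12*θ^2 + 8*θ^3 + 36*K + 48*K*θ + 24*K*θ^2 + 72*K^2 + 48*K^2*θ + 48*K^3)/(6*(2*K+1)^3) ≤ ((K+1)/K) ^ θ := by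
    have hy0 : 0 ≤ 2*θ/(2*K+1) := by positivity
    have h1 : (6 + 12*θ + 12*θ^2 + 8*θ^3 + 36*K + 48*K*θ + 24*K*θ^2 + 72*K^2 + 48*K^2*θ + 48*K^3)/(6*(2*K+1)^3)
        = ∑ i ∈ Finset.range 4, (2*θ/(2*K+1)) ^ i / i.factorial := by
      simp [Finset.sum_range_succ, Nat.factorial]
      field_simp
      ring
    have h2 := Real.sum_le_exp_of_nonneg hy0 4
    have h3 : Real.exp (2*θ/(2*K+1)) ≤ Real.exp (Real.log ((K+1)/K) * θ) := by
      apply Real.exp_le_exp.mpr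
      have : 2*θ/(2*K+1) = θ * (2/(2*K+1)) := by ring
      rw [this, mul_comm (Real.log ((K+1)/K)) θ]
      exact mul_le_mul_of_nonneg_left hlog ht
    have h4 : ((K+1)/K) ^ θ = Real.exp (Real.log ((K+1)/K) * θ) := by
      rw [Real.rpow_def_of_pos (by positivity)]
    rw [h1, h4]
    exact le_trans h2 h3
  calc F (k+1) ≤ ((6 + 12*θ + 12*θ^2 + 8*θ^3 + 36*K + 48*K*θ + 24*K*θ^2 + 72*K^2 + 48*K^2*θ + 48*K^3)/(6*(2*K+1)^3)) * F k := hmain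
    _ ≤ ((K+1)/K) ^ θ * F k := mul_le_mul_of_nonneg_right hLle hFk
end
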